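/- arXiv:2106.08652 — 4 statements merged into one kernel-verified Lean document; each statement's English description precedes it below -/
import Mathlib

section
/- For every nonempty finite set of solutions 𝒮, nonempty finite set of individuals 𝒰, and satisfaction function A : 𝒮 × 𝒰 → ℝ, there exists a maxmin-fair distribution over 𝒮, i.e., a distribution F such that scov(F) ⪰ scov(D) in the lexicographic order for every distribution D over 𝒮. -/
open Finset

/-- `v` is strictly greater than `w` in the lexicographic order. -/
def lexGT {n : ℕ} (v w : Fin n → ℝ) : Prop :=
  ∃ i, w i < v i ∧ ∀ j < i, v j = w j

/-- `v` is greater than or equal to `w` in the lexicographic order. -/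
def lexGE {n : ℕ} (v w : Fin n → ℝ) : Prop := v = w ∨ lexGT v w

/-- The vector `v` rearranged in increasing order. -/
noncomputable def sortedVec {n : ℕ} (v : Fin n → ℝ) : Fin n → ℝ :=
  v ∘ Tuple.sort v

/-- `p` is a probability distribution over `S`. -/
def IsDistrib {S : Type*} [Fintype S] (p : S → ℝ) : Prop :=
  (∀ s, 0 ≤ p s) ∧ ∑ s, p s = 1

/-- Expected satisfaction of individual `u` under the distribution `p`. -/
def expSat {S U : Type*} [Fintype S] (A : S → U → ℝ) (p : S → ℝ) (u : U) : ℝ :=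
  ∑ s, p s * A s u

/-- The vector of expected satisfactions, sorted in increasing order. -/
noncomputable def scov {S U : Type*} [Fintype S] [Fintype U] (A : S → U → ℝ) (p : S → ℝ) :
    Fin (Fintype.card U) → ℝ :=
  sortedVec (fun i => expSat A p ((Fintype.equivFin U).symm i))


section OS
variable {n : ℕ}

lemma pc_nonempty (i : Fin n) : ((univ : Finset (Fin n)).powersetCard ((i:ℕ)+1)).Nonempty := by
  rw [Finset.powersetCard_nonempty, Finset.card_univ, Fintype.card_fin]
  exact i.2

lemma mem_pc_nonempty {i : Fin n} {T : Finset (Fin n)}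
    (h : T ∈ (univ : Finset (Fin n)).powersetCard ((i:ℕ)+1)) : T.Nonempty := by
  rw [Finset.mem_powersetCard] at h
  exact Finset.card_pos.mp (h.2 ▸ Nat.succ_pos _)

/-- The `i`-th order statistic as a min-max formula. -/
noncomputable def OS (i : Fin n) (v : Fin n → ℝ) : ℝ :=
  (((univ : Finset (Fin n)).powersetCard ((i:ℕ)+1)).attach).inf'
    ((Finset.attach_nonempty_iff).2 (pc_nonempty i))
    (fun T => T.1.sup' (mem_pc_nonempty T.2) v)

lemma OS_eq (i : Fin n) (v : Fin n → ℝ) : OS i v = sortedVec v i := by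
  have hmono : Monotone (v ∘ Tuple.sort v) := Tuple.monotone_sort v
  have hsv : sortedVec v i = v (Tuple.sort v i) := rfl
  apply le_antisymm
  · set T₀ : Finset (Fin n) := (Iic i).image (Tuple.sort v) with hT₀def
    have hT₀ : T₀ ∈ (univ : Finset (Fin n)).powersetCard ((i:ℕ)+1) := by
      rw [Finset.mem_powersetCard_univ, hT₀def,
        Finset.card_image_of_injective _ (Tuple.sort v).injective, Fin.card_Iic]
    refine le_trans (Finset.inf'_le _ (Finset.mem_attach _ ⟨T₀, hT₀⟩)) ?_
    rw [hsv]
    apply Finset.sup'_le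
    intro x hx
    have hx' : x ∈ T₀ := hx
    rw [hT₀def, Finset.mem_image] at hx'
    obtain ⟨j, hj, rfl⟩ := hx'
    exact hmono (Finset.mem_Iic.mp hj)
  · apply Finset.le_inf'
    rintro ⟨T, hT⟩ -
    rw [Finset.mem_powersetCard_univ] at hT
    have hex : ∃ j ∈ T.image (Tuple.sort v).symm, i ≤ j := by
      by_contra hcon
      push_neg at hcon
      have hsub : T.image (Tuple.sort v).symm ⊆ Iio i := by
        intro j hj; exact Finset.mem_Iio.mpr (hcon j hj)
      have h1 : (T.image (Tuple.sort v).symm).card = (i:ℕ)+1 := by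
        rw [Finset.card_image_of_injective _ (Tuple.sort v).symm.injective, hT]
      have h2 := Finset.card_le_card hsub
      rw [h1, Fin.card_Iio] at h2
      omega
    obtain ⟨j, hjT, hij⟩ := hex
    rw [Finset.mem_image] at hjT
    obtain ⟨t, htT, rfl⟩ := hjT
    have : v (Tuple.sort v i) ≤ v (Tuple.sort v ((Tuple.sort v).symm t)) := hmono hij
    rw [Equiv.apply_symm_apply] at this
    rw [hsv]
    exact le_trans this (Finset.le_sup' v htT)

end OS

lemma continuous_scov_coord {S U : Type*} [Fintype S] [Fintype U] (A : S → U → ℝ)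
    (i : Fin (Fintype.card U)) : Continuous (fun p : S → ℝ => scov A p i) := by
  have h : ∀ p : S → ℝ, scov A p i
      = OS i (fun j => expSat A p ((Fintype.equivFin U).symm j)) := fun p => (OS_eq i _).symm
  simp only [h, OS]
  apply Continuous.finset_inf'_apply
  intro T _
  apply Continuous.finset_sup'_apply
  intro t _
  unfold expSat
  exact continuous_finset_sum _ (fun s _ => (continuous_apply s).mul continuous_const)

/-- For every nonempty finite set of solutions, nonempty finite set of individuals,
and satisfaction function, there exists a maxmin-fair distribution. -/
theorem maxmin_fair_exists {S U : Type*} [Fintype S] [Fintype U] [Nonempty S] [Nonempty U]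
    (A : S → U → ℝ) :
    ∃ F : S → ℝ, IsDistrib F ∧
      ∀ D : S → ℝ, IsDistrib D → lexGE (scov A F) (scov A D) := by
  classical
  set n := Fintype.card U with hn
  set G : ℕ → (S → ℝ) → ℝ := fun i p => if h : i < n then scov A p ⟨i, h⟩ else 0 with hGdef
  have hGc : ∀ i, Continuous (G i) := by
    intro i
    by_cases h : i < n
    · simpa [hGdef, h] using continuous_scov_coord A ⟨i, h⟩
    · simp only [hGdef, h, dif_neg, not_false_iff]
      exact continuous_const
  let K : ℕ → Set (S → ℝ) := fun k =>
    Nat.rec (stdSimplex ℝ S) (fun i Ki => {p | p ∈ Ki ∧ ∀ q ∈ Ki, G i q ≤ G i p}) k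
  have hK0 : K 0 = stdSimplex ℝ S := rfl
  have hKsucc : ∀ i, K (i+1) = {p | p ∈ K i ∧ ∀ q ∈ K i, G i q ≤ G i p} := fun i => rfl
  have hmonoK : ∀ i, K (i+1) ⊆ K i := fun i p hp => hp.1
  have hsub : ∀ i j, i ≤ j → K j ⊆ K i := by
    intro i j hij
    induction hij with
    | refl => exact Set.Subset.rfl
    | step h ih => exact ih.trans' (hmonoK _)
  have hkey : ∀ i, IsCompact (K i) ∧ (K i).Nonempty := by
    intro i
    induction i with
    | zero =>
      refine ⟨isCompact_stdSimplex ℝ S, ?_⟩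
      exact ⟨_, ite_eq_mem_stdSimplex (𝕜 := ℝ) (Classical.arbitrary S)⟩
    | succ i ih =>
      obtain ⟨hc, hne⟩ := ih
      obtain ⟨p₀, hp₀, hmax⟩ := hc.exists_isMaxOn hne (hGc i).continuousOn
      have hclosed : IsClosed {p : S → ℝ | ∀ q ∈ K i, G i q ≤ G i p} := by
        have h : {p : S → ℝ | ∀ q ∈ K i, G i q ≤ G i p}
            = ⋂ q ∈ K i, {p | G i q ≤ G i p} := by
          ext p; simp
        rw [h]
        exact isClosed_biInter (fun q _ => isClosed_le continuous_const (hGc i))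
      constructor
      · have h : K (i+1) = K i ∩ {p | ∀ q ∈ K i, G i q ≤ G i p} := rfl
        rw [h]
        exact hc.inter_right hclosed
      · exact ⟨p₀, hp₀, fun q hq => hmax hq⟩
  obtain ⟨F, hF⟩ := (hkey n).2
  have hFstd : F ∈ stdSimplex ℝ S := hsub 0 n (Nat.zero_le n) hF
  refine ⟨F, hFstd, ?_⟩
  intro D hD
  have hD0 : D ∈ K 0 := hD
  by_cases heq : scov A F = scov A D
  · exact Or.inl heq
  · right
    set P : ℕ → Prop := fun i => ∃ h : i < n, scov A F ⟨i, h⟩ ≠ scov A D ⟨i, h⟩ with hPdef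
    have hex : ∃ i, P i := by
      obtain ⟨i, hi⟩ := Function.ne_iff.mp heq
      exact ⟨i.1, i.2, by simpa using hi⟩
    let i₀ := Nat.find hex
    obtain ⟨hi₀n, hi₀ne⟩ : P i₀ := Nat.find_spec hex
    have hlt : ∀ j (hj : j < n), j < i₀ → scov A F ⟨j, hj⟩ = scov A D ⟨j, hj⟩ := by
      intro j hj hji
      by_contra hne
      exact Nat.find_min hex hji ⟨hj, hne⟩
    have hDK : ∀ k, k ≤ i₀ → D ∈ K k := by
      intro k hk
      induction k with
      | zero => exact hD0
      | succ k ih =>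
        have hk' : k ≤ i₀ := Nat.le_of_succ_le hk
        have hDk : D ∈ K k := ih hk'
        have hkn : k < n := lt_of_lt_of_le (Nat.lt_of_succ_le hk) (Nat.le_of_lt hi₀n) |>.trans_le (le_refl n) -- fix below
        refine (hKsucc k) ▸ ⟨hDk, ?_⟩
        intro q hq
        have hFk1 : F ∈ K (k+1) := hsub (k+1) n (by omega) hF
        have hmaxF : ∀ q ∈ K k, G k q ≤ G k F := ((hKsucc k) ▸ hFk1).2
        have hGeq : G k D = G k F := by
          have hkn' : k < n := by omega
          simp only [hGdef, dif_pos hkn']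
          exact (hlt k hkn' (by omega)).symm
        rw [hGeq]
        exact hmaxF q hq
    have hDKi : D ∈ K i₀ := hDK i₀ le_rfl
    have hFK1 : F ∈ K (i₀+1) := hsub (i₀+1) n (by omega) hF
    have hle : G i₀ D ≤ G i₀ F := ((hKsucc i₀) ▸ hFK1).2 D hDKi
    rw [hGdef] at hle
    simp only [dif_pos hi₀n] at hle
    refine ⟨⟨i₀, hi₀n⟩, lt_of_le_of_ne hle (Ne.symm hi₀ne), ?_⟩
    intro j hj
    have : (j : ℕ) < i₀ := hj
    have h := hlt j.1 j.2 this
    simpa using h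
end

section
/- A distribution F over 𝒮 satisfies the pointwise maxmin-fairness condition — for every distribution D over 𝒮 and every u ∈ 𝒰, if D[u] > F[u] then there exists v ∈ 𝒰 with D[v] < F[v] and F[v] ≤ F[u] — if and only if scov(F) ⪰ scov(D) in the lexicographic order for every distribution D over 𝒮. -/
open Finset

/-! ### Auxiliary lemmas -/

open scoped Classical

lemma lexGT_irrefl' {n : ℕ} (a : Fin n → ℝ) : ¬ lexGT a a := by
  rintro ⟨i, hi, -⟩; exact lt_irrefl _ hi

lemma lexGT_asymm' {n : ℕ} {a b : Fin n → ℝ} (h1 : lexGT a b) (h2 : lexGT b a) : False := by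
  obtain ⟨i, hi, hpi⟩ := h1
  obtain ⟨j, hj, hpj⟩ := h2
  rcases lt_trichotomy i j with h | h | h
  · exact hi.ne (hpj i h)
  · subst h; exact lt_irrefl _ (hi.trans hj)
  · exact hj.ne (hpi j h)

lemma down_mem_iff {n : ℕ} {s : Finset (Fin n)}
    (h : ∀ ⦃i j : Fin n⦄, j ≤ i → i ∈ s → j ∈ s) {i : Fin n} :
    i ∈ s ↔ (i : ℕ) < s.card := by
  constructor
  · intro hi
    have hsub : Finset.Iic i ⊆ s := fun j hj => h (Finset.mem_Iic.mp hj) hi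
    have hc := Finset.card_le_card hsub
    rw [Fin.card_Iic] at hc
    omega
  · intro hlt
    by_contra hi
    have hsub : s ⊆ Finset.Iio i := by
      intro v hv
      rw [Finset.mem_Iio]
      by_contra hvi
      exact hi (h (le_of_not_gt hvi) hv)
    have hc := Finset.card_le_card hsub
    rw [Fin.card_Iio] at hc
    omega

lemma mono_le_iff {n : ℕ} {a : Fin n → ℝ} (ha : Monotone a) (x : ℝ) (i : Fin n) :
    a i ≤ x ↔ (i : ℕ) < (univ.filter fun j => a j ≤ x).card := by
  have hd : ∀ ⦃p q : Fin n⦄, q ≤ p → p ∈ (univ.filter fun j => a j ≤ x) →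
      q ∈ (univ.filter fun j => a j ≤ x) := by
    intro p q hqp hp
    simp only [mem_filter, mem_univ, true_and] at *
    exact le_trans (ha hqp) hp
  have := down_mem_iff hd (i := i)
  simp only [mem_filter, mem_univ, true_and] at this
  exact this

lemma mono_lt_iff {n : ℕ} {a : Fin n → ℝ} (ha : Monotone a) (x : ℝ) (i : Fin n) :
    a i < x ↔ (i : ℕ) < (univ.filter fun j => a j < x).card := by
  have hd : ∀ ⦃p q : Fin n⦄, q ≤ p → p ∈ (univ.filter fun j => a j < x) →
      q ∈ (univ.filter fun j => a j < x) := by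
    intro p q hqp hp
    simp only [mem_filter, mem_univ, true_and] at *
    exact lt_of_le_of_lt (ha hqp) hp
  have := down_mem_iff hd (i := i)
  simp only [mem_filter, mem_univ, true_and] at this
  exact this

lemma card_filter_equiv' {α β : Type*} [Fintype α] [Fintype β] (e : α ≃ β) (P : β → Prop) :
    (univ.filter fun a => P (e a)).card = (univ.filter P).card := by
  apply Finset.card_equiv e
  intro i; simp

lemma sum_filter_equiv' {α β : Type*} [Fintype α] [Fintype β] (e : α ≃ β) (P : β → Prop)
    (g : β → ℝ) :
    ∑ i ∈ univ.filter (fun a => P (e a)), g (e i) = ∑ b ∈ univ.filter P, g b := by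
  exact Finset.sum_equiv e (by intro i; simp) (by intro i _; rfl)

/-- Core lexicographic comparison lemma, strict-count version. -/
lemma core_lt {n : ℕ} {a b : Fin n → ℝ} (ha : Monotone a) (hb : Monotone b) (t : ℝ)
    (hle : ∀ x, x < t →
      (univ.filter fun j => a j ≤ x).card ≤ (univ.filter fun j => b j ≤ x).card)
    (hlt : (univ.filter fun j => a j < t).card < (univ.filter fun j => b j < t).card) :
    lexGT a b := by
  have hne : a ≠ b := by rintro rfl; exact lt_irrefl _ hlt
  have hS : (univ.filter fun i => a i ≠ b i).Nonempty := by
    rw [Function.ne_iff] at hne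
    obtain ⟨i, hi⟩ := hne
    exact ⟨i, by simp [hi]⟩
  set i := (univ.filter fun i => a i ≠ b i).min' hS with hidef
  have hi_mem : a i ≠ b i := by
    have := Finset.min'_mem _ hS
    simpa using this
  have hpre : ∀ j < i, a j = b j := by
    intro j hj
    by_contra hne'
    exact absurd hj (not_lt.mpr (Finset.min'_le _ _ (by simp [hne'])))
  refine ⟨i, ?_, hpre⟩
  rcases lt_trichotomy (a i) (b i) with hab | hab | hab
  · exfalso
    by_cases hx : a i < t
    · have h1 : (i : ℕ) < (univ.filter fun j => a j ≤ a i).card :=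
        (mono_le_iff ha (a i) i).mp le_rfl
      have h2 : (i : ℕ) < (univ.filter fun j => b j ≤ a i).card :=
        lt_of_lt_of_le h1 (hle _ hx)
      exact absurd ((mono_le_iff hb (a i) i).mpr h2) (not_le.mpr hab)
    · push_neg at hx
      have hsub : (univ.filter fun j => a j < t)
          = (univ.filter fun j => b j < t) ∩ Finset.Iio i := by
        ext j
        simp only [mem_filter, mem_univ, true_and, mem_inter, mem_Iio]
        constructor
        · intro hj
          have hji : j < i := by
            by_contra hji
            exact absurd (ha (not_lt.mp hji)) (not_le.mpr (lt_of_lt_of_le hj hx))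
          exact ⟨(hpre j hji) ▸ hj, hji⟩
        · rintro ⟨hj, hji⟩
          rw [hpre j hji]; exact hj
      have hnsub : ¬ ((univ.filter fun j => b j < t) ⊆ Finset.Iio i) := by
        intro hss
        have heq : (univ.filter fun j => b j < t) ∩ Finset.Iio i
            = (univ.filter fun j => b j < t) := Finset.inter_eq_left.mpr hss
        rw [hsub, heq] at hlt
        exact lt_irrefl _ hlt
      obtain ⟨j, hjmem, hj2⟩ := Finset.not_subset.mp hnsub
      simp only [mem_filter, mem_univ, true_and] at hjmem
      rw [Finset.mem_Iio, not_lt] at hj2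
      have hbi : b i < t := lt_of_le_of_lt (hb hj2) hjmem
      exact lt_asymm hab (lt_of_lt_of_le hbi hx)
  · exact absurd hab hi_mem
  · exact hab

/-- Core lexicographic comparison lemma, sum version. -/
lemma core_le {n : ℕ} {a b : Fin n → ℝ} (ha : Monotone a) (hb : Monotone b) (t : ℝ)
    (hle : ∀ x, x ≤ t →
      (univ.filter fun j => b j ≤ x).card ≤ (univ.filter fun j => a j ≤ x).card)
    (hsum : (univ.filter fun j => b j ≤ t).card = (univ.filter fun j => a j ≤ t).card →
      ∑ j ∈ univ.filter (fun j => b j ≤ t), b j ≠ ∑ j ∈ univ.filter (fun j => a j ≤ t), a j) :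
    lexGT b a := by
  have hne : b ≠ a := by
    rintro rfl
    exact hsum rfl rfl
  have hS : (univ.filter fun i => b i ≠ a i).Nonempty := by
    rw [Function.ne_iff] at hne
    obtain ⟨i, hi⟩ := hne
    exact ⟨i, by simp [hi]⟩
  set i := (univ.filter fun i => b i ≠ a i).min' hS with hidef
  have hi_mem : b i ≠ a i := by
    have := Finset.min'_mem _ hS
    simpa using this
  have hpre : ∀ j < i, b j = a j := by
    intro j hj
    by_contra hne'
    exact absurd hj (not_lt.mpr (Finset.min'_le _ _ (by simp [hne'])))
  refine ⟨i, ?_, hpre⟩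
  rcases lt_trichotomy (a i) (b i) with hab | hab | hab
  · exact hab
  · exact absurd hab.symm hi_mem
  · exfalso
    by_cases hx : b i ≤ t
    · have h1 : (i : ℕ) < (univ.filter fun j => b j ≤ b i).card :=
        (mono_le_iff hb (b i) i).mp le_rfl
      have h2 : (i : ℕ) < (univ.filter fun j => a j ≤ b i).card :=
        lt_of_lt_of_le h1 (hle _ hx)
      exact absurd ((mono_le_iff ha (b i) i).mpr h2) (not_le.mpr hab)
    · push_neg at hx
      have hai : t < a i := hx.trans hab
      have hseteq : (univ.filter fun j => b j ≤ t) = (univ.filter fun j => a j ≤ t) := by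
        ext j
        simp only [mem_filter, mem_univ, true_and]
        constructor
        · intro hj
          have hji : j < i := by
            by_contra hji
            exact absurd (hb (not_lt.mp hji)) (not_le.mpr (lt_of_le_of_lt hj hx))
          rw [← hpre j hji]; exact hj
        · intro hj
          have hji : j < i := by
            by_contra hji
            exact absurd (ha (not_lt.mp hji)) (not_le.mpr (lt_of_le_of_lt hj hai))
          rw [hpre j hji]; exact hj
      apply hsum (by rw [hseteq])
      rw [hseteq]
      apply Finset.sum_congr rfl
      intro j hj
      simp only [mem_filter, mem_univ, true_and] at hj
      have hji : j < i := by
        by_contra hji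
        exact absurd (ha (not_lt.mp hji)) (not_le.mpr (lt_of_le_of_lt hj hai))
      exact hpre j hji

/-- Sorted vector of a function on a finite type. -/
noncomputable def svec {U : Type*} [Fintype U] (g : U → ℝ) : Fin (Fintype.card U) → ℝ :=
  sortedVec (fun i => g ((Fintype.equivFin U).symm i))

lemma scov_eq_svec {S U : Type*} [Fintype S] [Fintype U] (A : S → U → ℝ) (p : S → ℝ) :
    scov A p = svec (expSat A p) := rfl

lemma svec_monotone {U : Type*} [Fintype U] (g : U → ℝ) : Monotone (svec g) := by
  unfold svec sortedVec
  exact Tuple.monotone_sort _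

/-- The permutation realizing `svec`. -/
noncomputable def svecEquiv {U : Type*} [Fintype U] (g : U → ℝ) : Fin (Fintype.card U) ≃ U :=
  (Tuple.sort (fun i => g ((Fintype.equivFin U).symm i))).trans (Fintype.equivFin U).symm

lemma svec_eq {U : Type*} [Fintype U] (g : U → ℝ) (i : Fin (Fintype.card U)) :
    svec g i = g (svecEquiv g i) := rfl

lemma svec_card_le {U : Type*} [Fintype U] (g : U → ℝ) (x : ℝ) :
    (univ.filter fun i => svec g i ≤ x).card = (univ.filter fun u => g u ≤ x).card := by
  simp only [svec_eq]
  exact card_filter_equiv' (svecEquiv g) (fun u => g u ≤ x)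

lemma svec_card_lt {U : Type*} [Fintype U] (g : U → ℝ) (x : ℝ) :
    (univ.filter fun i => svec g i < x).card = (univ.filter fun u => g u < x).card := by
  simp only [svec_eq]
  exact card_filter_equiv' (svecEquiv g) (fun u => g u < x)

lemma svec_sum_le {U : Type*} [Fintype U] (g : U → ℝ) (x : ℝ) :
    ∑ i ∈ univ.filter (fun i => svec g i ≤ x), svec g i
      = ∑ u ∈ univ.filter (fun u => g u ≤ x), g u := by
  simp only [svec_eq]
  exact sum_filter_equiv' (svecEquiv g) (fun u => g u ≤ x) g

lemma expSat_mix {S U : Type*} [Fintype S] (A : S → U → ℝ) (F D : S → ℝ) (ε : ℝ) (u : U) :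
    expSat A (fun s => (1 - ε) * F s + ε * D s) u
      = (1 - ε) * expSat A F u + ε * expSat A D u := by
  unfold expSat
  rw [Finset.mul_sum, Finset.mul_sum, ← Finset.sum_add_distrib]
  apply Finset.sum_congr rfl
  intro s _
  ring

lemma isDistrib_mix {S : Type*} [Fintype S] {F D : S → ℝ} (hF : IsDistrib F) (hD : IsDistrib D)
    {ε : ℝ} (h0 : 0 ≤ ε) (h1 : ε ≤ 1) : IsDistrib (fun s => (1 - ε) * F s + ε * D s) := by
  constructor
  · intro s
    have h2 := hF.1 s
    have h3 := hD.1 s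
    show 0 ≤ (1 - ε) * F s + ε * D s
    nlinarith
  · rw [Finset.sum_add_distrib, ← Finset.mul_sum, ← Finset.mul_sum, hF.2, hD.2]
    ring

/-- A distribution `F` satisfies the pointwise maxmin-fairness condition iff
`scov F` lexicographically dominates `scov D` for every distribution `D`. -/
theorem maxmin_pointwise_iff_lex {S U : Type*} [Fintype S] [Fintype U] [Nonempty S] [Nonempty U]
    (A : S → U → ℝ) (F : S → ℝ) (hF : IsDistrib F) :
    (∀ D : S → ℝ, IsDistrib D → ∀ u : U, expSat A F u < expSat A D u →
        ∃ v : U, expSat A D v < expSat A F v ∧ expSat A F v ≤ expSat A F u)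
      ↔ (∀ D : S → ℝ, IsDistrib D → lexGE (scov A F) (scov A D)) := by
  constructor
  · -- pointwise condition implies lexicographic dominance
    intro hP D hD
    set f := expSat A F with hfdef
    set g := expSat A D with hgdef
    by_cases hex : ∃ v, g v < f v
    · right
      obtain ⟨v0, hv0⟩ := hex
      set S0 := univ.filter fun v => g v < f v with hS0
      have hS0ne : S0.Nonempty := ⟨v0, by simp [hS0, hv0]⟩
      set tstar := S0.inf' hS0ne f with htdef
      obtain ⟨vs, hvs_mem, hvs⟩ := Finset.exists_mem_eq_inf' hS0ne f
      simp only [hS0, mem_filter, mem_univ, true_and] at hvs_mem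
      have hmin : ∀ v, g v < f v → tstar ≤ f v := fun v hv =>
        Finset.inf'_le f (by simp [hS0, hv])
      have hLeq : ∀ v, f v < tstar → g v = f v := by
        intro v hv
        rcases lt_trichotomy (g v) (f v) with h | h | h
        · exact absurd hv (not_lt.mpr (hmin v h))
        · exact h
        · obtain ⟨w, hw1, hw2⟩ := hP D hD v h
          exact absurd (lt_of_le_of_lt hw2 hv) (not_lt.mpr (hmin w hw1))
      rw [scov_eq_svec, scov_eq_svec, ← hfdef, ← hgdef]
      apply core_lt (svec_monotone f) (svec_monotone g) tstar
      · intro x hx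
        rw [svec_card_le, svec_card_le]
        apply Finset.card_le_card
        intro v hv
        simp only [mem_filter, mem_univ, true_and] at *
        rw [hLeq v (lt_of_le_of_lt hv hx)]
        exact hv
      · rw [svec_card_lt, svec_card_lt]
        apply Finset.card_lt_card
        have hsub : (univ.filter fun v => f v < tstar) ⊆ (univ.filter fun v => g v < tstar) := by
          intro v hv
          simp only [mem_filter, mem_univ, true_and] at *
          rw [hLeq v hv]
          exact hv
        rw [Finset.ssubset_iff_of_subset hsub]
        have hts : tstar = f vs := htdef.trans hvs
        refine ⟨vs, ?_, ?_⟩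
        · simp only [mem_filter, mem_univ, true_and]
          rw [hts]
          exact hvs_mem
        · simp only [mem_filter, mem_univ, true_and, not_lt]
          exact le_of_eq hts
    · left
      push_neg at hex
      have heq : expSat A D = expSat A F := by
        funext v
        refine le_antisymm ?_ (hex v)
        by_contra h
        push_neg at h
        obtain ⟨w, hw1, _⟩ := hP D hD v h
        exact absurd (hex w) (not_le.mpr hw1)
      unfold scov
      rw [heq]
  · -- lexicographic dominance implies pointwise condition
    intro hlex D hD u hu
    by_contra hcon
    push_neg at hcon
    set f := expSat A F with hfdef
    set g := expSat A D with hgdef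
    set t := f u with htdef
    have hL : ∀ v, f v ≤ t → f v ≤ g v := by
      intro v hv
      by_contra h
      push_neg at h
      exact absurd hv (not_le.mpr (hcon v h))
    -- choose a mixing parameter ε
    obtain ⟨ε, hε0, hε1, hεoff⟩ :
        ∃ ε : ℝ, 0 < ε ∧ ε ≤ 1 ∧ ∀ v, t < f v → t < (1 - ε) * f v + ε * g v := by
      by_cases hT : (univ.filter fun v => t < f v).Nonempty
      · set δ := (univ.filter fun v => t < f v).inf' hT (fun v => f v - t) with hδdef
        have hδ0 : 0 < δ := by
          rw [hδdef, Finset.lt_inf'_iff]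
          intro v hv
          simp only [mem_filter, mem_univ, true_and] at hv
          linarith
        set C := max 1 ((univ.filter fun v => t < f v).sup' hT (fun v => f v - g v)) with hCdef
        have hC1 : (1 : ℝ) ≤ C := le_max_left _ _
        have hC0 : (0 : ℝ) < C := lt_of_lt_of_le one_pos hC1
        refine ⟨min 1 (δ / (2 * C)), lt_min one_pos (by positivity), min_le_left _ _, ?_⟩
        intro v hv
        have hfg : f v - g v ≤ C :=
          le_trans (Finset.le_sup' (fun v => f v - g v) (by simp [hv])) (le_max_right _ _)
        have hδv : δ ≤ f v - t := Finset.inf'_le _ (by simp [hv])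
        have hεle : min 1 (δ / (2 * C)) ≤ δ / (2 * C) := min_le_right _ _
        have hεpos : 0 < min 1 (δ / (2 * C)) := lt_min one_pos (by positivity)
        have hεC : min 1 (δ / (2 * C)) * C ≤ δ / 2 := by
          calc min 1 (δ / (2 * C)) * C ≤ (δ / (2 * C)) * C := by nlinarith
            _ = δ / 2 := by field_simp
        have hkey : min 1 (δ / (2 * C)) * (f v - g v) ≤ δ / 2 :=
          le_trans (mul_le_mul_of_nonneg_left hfg hεpos.le) hεC
        have hexpand : (1 - min 1 (δ / (2 * C))) * f v + min 1 (δ / (2 * C)) * g v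
            = f v - min 1 (δ / (2 * C)) * (f v - g v) := by ring
        rw [hexpand]
        linarith
      · exact ⟨1, one_pos, le_refl 1, fun v hv =>
          absurd (⟨v, by simp [hv]⟩ : (univ.filter fun v => t < f v).Nonempty) hT⟩
    set E := fun s => (1 - ε) * F s + ε * D s with hEdef
    have hE : IsDistrib E := isDistrib_mix hF hD hε0.le hε1
    set gE := expSat A E with hgEdef
    have hgEeq : ∀ v, gE v = (1 - ε) * f v + ε * g v := fun v => expSat_mix A F D ε v
    have hg1 : ∀ v, f v ≤ t → f v ≤ gE v := by
      intro v hv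
      rw [hgEeq v]
      have := hL v hv
      nlinarith
    have hgu : f u < gE u := by
      rw [hgEeq u]
      nlinarith
    have hoff : ∀ v, t < f v → t < gE v := by
      intro v hv
      rw [hgEeq v]
      exact hεoff v hv
    have hLmem : ∀ v, gE v ≤ t → f v ≤ t := by
      intro v hv
      by_contra h
      push_neg at h
      exact absurd hv (not_le.mpr (hoff v h))
    have hgt : lexGT (svec gE) (svec f) := by
      apply core_le (svec_monotone f) (svec_monotone gE) t
      · intro x hx
        rw [svec_card_le, svec_card_le]
        apply Finset.card_le_card
        intro v hv
        simp only [mem_filter, mem_univ, true_and] at *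
        exact le_trans (hg1 v (hLmem v (le_trans hv hx))) hv
      · intro hcard
        rw [svec_card_le, svec_card_le] at hcard
        rw [svec_sum_le, svec_sum_le]
        have hsub : (univ.filter fun v => gE v ≤ t) ⊆ (univ.filter fun v => f v ≤ t) := by
          intro v hv
          simp only [mem_filter, mem_univ, true_and] at *
          exact hLmem v hv
        have hset : (univ.filter fun v => gE v ≤ t) = (univ.filter fun v => f v ≤ t) :=
          Finset.eq_of_subset_of_card_le hsub (le_of_eq hcard.symm)
        rw [hset]
        apply ne_of_gt
        apply Finset.sum_lt_sum
        · intro v hv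
          simp only [mem_filter, mem_univ, true_and] at hv
          exact hg1 v hv
        · refine ⟨u, ?_, hgu⟩
          simp only [mem_filter, mem_univ, true_and]
          rw [← htdef]
    have hFE := hlex E hE
    rw [scov_eq_svec, scov_eq_svec, ← hfdef, ← hgEdef] at hFE
    rcases hFE with hFE | hFE
    · rw [hFE] at hgt
      exact lexGT_irrefl' _ hgt
    · exact lexGT_asymm' hFE hgt
end

section
/- Let F be a maxmin-fair distribution over the set 𝒮 of valid rankings, and let u₁, u₂ ∈ 𝒰 belong to the same class C_k with g(u₁) ≥ g(u₂). If there exists a ranking r ∈ 𝒮 with F-probability p(r) > 0 such that f(r(u₂)) > f(r(u₁)), then F[u₁] ≥ F[u₂]. -/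
open Finset

/-- A probability distribution supported on the valid rankings `Vld`. -/
def IsDistribOn {U : Type*} [Fintype U] [DecidableEq U]
    (Vld : (U ≃ Fin (Fintype.card U)) → Prop) (p : (U ≃ Fin (Fintype.card U)) → ℝ) : Prop :=
  (∀ r, 0 ≤ p r) ∧ (∑ r : U ≃ Fin (Fintype.card U), p r = 1) ∧ (∀ r, p r ≠ 0 → Vld r)

/-- Expected value `D[u] = E_{r∼p}[f(r(u)) - g(u)]` of individual `u` under distribution `p`. -/
def EV {U : Type*} [Fintype U] [DecidableEq U] (f : Fin (Fintype.card U) → ℝ) (g : U → ℝ)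
    (p : (U ≃ Fin (Fintype.card U)) → ℝ) (u : U) : ℝ :=
  ∑ r : U ≃ Fin (Fintype.card U), p r * (f (r u) - g u)

/-- The vector of expected values, sorted in increasing order. -/
noncomputable def scovR {U : Type*} [Fintype U] [DecidableEq U]
    (f : Fin (Fintype.card U) → ℝ) (g : U → ℝ) (p : (U ≃ Fin (Fintype.card U)) → ℝ) :
    Fin (Fintype.card U) → ℝ :=
  sortedVec (fun i => EV f g p ((Fintype.equivFin U).symm i))

/-- `F` is a maxmin-fair distribution over the valid rankings `Vld`. -/
def MaxminFair {U : Type*} [Fintype U] [DecidableEq U]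
    (Vld : (U ≃ Fin (Fintype.card U)) → Prop) (f : Fin (Fintype.card U) → ℝ) (g : U → ℝ)
    (F : (U ≃ Fin (Fintype.card U)) → ℝ) : Prop :=
  IsDistribOn Vld F ∧ ∀ D, IsDistribOn Vld D → lexGE (scovR f g F) (scovR f g D)

/-- A ranking is valid if, for every prefix length `i` and class `k`, the number of
individuals of class `k` in the top `i` positions is between `lb i k` and `ub i k`. -/
def ValidLU {U : Type*} [Fintype U] {t : ℕ} (c : U → Fin t)
    (lb ub : Fin (Fintype.card U) → Fin t → ℕ) (r : U ≃ Fin (Fintype.card U)) : Prop :=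
  ∀ i : Fin (Fintype.card U), ∀ k : Fin t,
    lb i k ≤ (Finset.univ.filter (fun u => c u = k ∧ r u ≤ i)).card ∧
    (Finset.univ.filter (fun u => c u = k ∧ r u ≤ i)).card ≤ ub i k

/-! ### Auxiliary lemmas -/

/-- number of entries of `v` that are `≤ x` -/
noncomputable def cnt {n : ℕ} (v : Fin n → ℝ) (x : ℝ) : ℕ :=
  #(univ.filter fun i => v i ≤ x)

lemma cnt_sorted {n : ℕ} (v : Fin n → ℝ) (x : ℝ) : cnt (sortedVec v) x = cnt v x := by
  unfold cnt sortedVec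
  rw [Finset.card_filter, Finset.card_filter]
  exact Equiv.sum_comp (Tuple.sort v) (fun j => if v j ≤ x then 1 else 0)

lemma sortedVec_sum_sq {n : ℕ} (v : Fin n → ℝ) :
    ∑ i, (sortedVec v i) ^ 2 = ∑ i, (v i) ^ 2 :=
  Equiv.sum_comp (Tuple.sort v) (fun j => (v j) ^ 2)

lemma sum_split {M : Type*} [AddCommMonoid M] {n : ℕ} (p q : Fin n) (hpq : p ≠ q)
    (h : Fin n → M) : ∑ i, h i = h p + h q + ∑ i ∈ (univ.erase p).erase q, h i := by
  rw [← Finset.add_sum_erase univ h (mem_univ p),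
    ← Finset.add_sum_erase (univ.erase p) h (Finset.mem_erase.2 ⟨hpq.symm, mem_univ q⟩),
    add_assoc]

lemma key_lex {n : ℕ} (v w : Fin n → ℝ) (p q : Fin n) (hpq : p ≠ q)
    (hother : ∀ i, i ≠ p → i ≠ q → v i = w i)
    {a b ti : ℝ} (hvp : v p = a) (hvq : v q = b) (hwp : w p = a + ti) (hwq : w q = b - ti)
    (ht : 0 < ti) (hab : a + ti < b - ti) :
    ¬ lexGE (sortedVec v) (sortedVec w) := by
  intro hGE
  have hmv : Monotone (sortedVec v) := Tuple.monotone_sort v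
  have hmw : Monotone (sortedVec w) := Tuple.monotone_sort w
  have hrest : ∀ (φ : ℝ → ℝ), ∑ i ∈ (univ.erase p).erase q, φ (v i)
      = ∑ i ∈ (univ.erase p).erase q, φ (w i) := by
    intro φ
    refine Finset.sum_congr rfl fun i hi => ?_
    rw [Finset.mem_erase, Finset.mem_erase] at hi
    rw [hother i hi.2.1 hi.1]
  have hcnt : ∀ x : ℝ, cnt w x + ((if a ≤ x then 1 else 0) + (if b ≤ x then 1 else 0))
      = cnt v x + ((if a + ti ≤ x then 1 else 0) + (if b - ti ≤ x then 1 else 0)) := by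
    intro x
    have hrestn : ∑ i ∈ (univ.erase p).erase q, (if v i ≤ x then 1 else 0)
        = ∑ i ∈ (univ.erase p).erase q, (if w i ≤ x then 1 else 0) := by
      refine Finset.sum_congr rfl fun i hi => ?_
      rw [Finset.mem_erase, Finset.mem_erase] at hi
      rw [hother i hi.2.1 hi.1]
    have hv : cnt v x = (if a ≤ x then 1 else 0) + (if b ≤ x then 1 else 0)
        + ∑ i ∈ (univ.erase p).erase q, (if v i ≤ x then 1 else 0) := by
      rw [cnt, Finset.card_filter, sum_split p q hpq, hvp, hvq]
    have hw : cnt w x = (if a + ti ≤ x then 1 else 0) + (if b - ti ≤ x then 1 else 0)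
        + ∑ i ∈ (univ.erase p).erase q, (if w i ≤ x then 1 else 0) := by
      rw [cnt, Finset.card_filter, sum_split p q hpq, hwp, hwq]
    rw [hv, hw, hrestn]; ring
  rcases hGE with heq | ⟨j, hj, hjlt⟩
  · have hsq : ∑ i, (v i) ^ 2 = ∑ i, (w i) ^ 2 := by
      rw [← sortedVec_sum_sq v, ← sortedVec_sum_sq w, heq]
    rw [sum_split p q hpq (fun i => (v i) ^ 2), sum_split p q hpq (fun i => (w i) ^ 2),
      hvp, hvq, hwp, hwq, hrest (fun x => x ^ 2)] at hsq
    nlinarith [hsq]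
  · set z := sortedVec w j with hz
    have hA : (j : ℕ) + 1 ≤ cnt w z := by
      rw [← cnt_sorted w z]
      calc (j : ℕ) + 1 = #(Finset.Iic j) := (Fin.card_Iic j).symm
        _ ≤ cnt (sortedVec w) z := by
            apply Finset.card_le_card
            intro i hi
            exact Finset.mem_filter.2 ⟨mem_univ _, hmw (Finset.mem_Iic.1 hi)⟩
    have hA' : cnt v z ≤ (j : ℕ) := by
      rw [← cnt_sorted v z]
      calc cnt (sortedVec v) z ≤ #(Finset.Iio j) := by
            apply Finset.card_le_card
            intro i hi
            rw [Finset.mem_filter] at hi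
            rw [Finset.mem_Iio]
            by_contra hij
            push_neg at hij
            exact absurd (lt_of_le_of_lt (le_trans (hmv hij) hi.2) hj) (lt_irrefl _)
        _ = (j : ℕ) := Fin.card_Iio j
    have hB : b - ti ≤ z := by
      by_contra hzb
      push_neg at hzb
      have hcz := hcnt z
      rw [if_neg (by linarith : ¬ b - ti ≤ z), if_neg (by linarith : ¬ b ≤ z)] at hcz
      have e3 : (if a + ti ≤ z then (1:ℕ) else 0) ≤ (if a ≤ z then 1 else 0) := by
        by_cases h1 : a + ti ≤ z
        · rw [if_pos h1, if_pos (by linarith)]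
        · rw [if_neg h1]; exact Nat.zero_le _
      omega
    have haz : a < z := by linarith
    have hca := hcnt a
    rw [if_pos (le_refl a), if_neg (by linarith : ¬ b ≤ a),
      if_neg (by linarith : ¬ a + ti ≤ a), if_neg (by linarith : ¬ b - ti ≤ a)] at hca
    have hD : cnt v a = cnt w a := by
      rw [← cnt_sorted v a, ← cnt_sorted w a, cnt, cnt, Finset.card_filter, Finset.card_filter]
      refine Finset.sum_congr rfl fun i _ => ?_
      by_cases hij : i < j
      · rw [hjlt i hij]
      · push_neg at hij
        rw [if_neg (by push_neg; exact lt_of_lt_of_le (lt_of_lt_of_le haz (le_of_lt hj)) (hmv hij)),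
          if_neg (by push_neg; exact lt_of_lt_of_le haz (hmw hij))]
    omega

lemma class_swap {U : Type*} [DecidableEq U] {t : ℕ} {c : U → Fin t} {u₁ u₂ : U}
    (hclass : c u₁ = c u₂) (u : U) : c (Equiv.swap u₁ u₂ u) = c u := by
  rcases eq_or_ne u u₁ with h | h
  · subst h; rw [Equiv.swap_apply_left, hclass]
  rcases eq_or_ne u u₂ with h2 | h2
  · subst h2; rw [Equiv.swap_apply_right, hclass]
  · rw [Equiv.swap_apply_of_ne_of_ne h h2]

lemma valid_swap {U : Type*} [Fintype U] [DecidableEq U] {t : ℕ} {c : U → Fin t}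
    {lb ub : Fin (Fintype.card U) → Fin t → ℕ} {u₁ u₂ : U} (hclass : c u₁ = c u₂)
    (r : U ≃ Fin (Fintype.card U)) (h : ValidLU c lb ub ((Equiv.swap u₁ u₂).trans r)) :
    ValidLU c lb ub r := by
  intro i k
  have hcard : #(univ.filter fun u => c u = k ∧ r u ≤ i)
      = #(univ.filter fun u => c u = k ∧ ((Equiv.swap u₁ u₂).trans r) u ≤ i) := by
    apply Finset.card_bij' (fun u _ => Equiv.swap u₁ u₂ u) (fun u _ => Equiv.swap u₁ u₂ u)
    · intro u hu
      rw [Finset.mem_filter] at hu ⊢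
      refine ⟨mem_univ _, ?_, ?_⟩
      · rw [class_swap hclass]; exact hu.2.1
      · show r (Equiv.swap u₁ u₂ (Equiv.swap u₁ u₂ u)) ≤ i
        rw [Equiv.swap_apply_self]; exact hu.2.2
    · intro u hu
      rw [Finset.mem_filter] at hu ⊢
      exact ⟨mem_univ _, by rw [class_swap hclass]; exact hu.2.1, hu.2.2⟩
    · intro u _; exact Equiv.swap_apply_self _ _ _
    · intro u _; exact Equiv.swap_apply_self _ _ _
  rw [hcard]; exact h i k

/-- If some ranking with positive probability under the maxmin-fair distribution `F`
places `u₂` at a strictly better position value than `u₁`, where `u₁, u₂` are in the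
same class and `g u₁ ≥ g u₂`, then `F[u₁] ≥ F[u₂]`. -/
theorem meritocracy_swap {U : Type*} [Fintype U] [DecidableEq U] {t : ℕ}
    (c : U → Fin t) (lb ub : Fin (Fintype.card U) → Fin t → ℕ)
    (f : Fin (Fintype.card U) → ℝ) (hf : Antitone f) (g : U → ℝ)
    (hS : ∃ r, ValidLU c lb ub r)
    (F : (U ≃ Fin (Fintype.card U)) → ℝ) (hF : MaxminFair (ValidLU c lb ub) f g F)
    (u₁ u₂ : U) (hclass : c u₁ = c u₂) (hg : g u₂ ≤ g u₁)
    (hr : ∃ r : U ≃ Fin (Fintype.card U), 0 < F r ∧ f (r u₁) < f (r u₂)) :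
    EV f g F u₂ ≤ EV f g F u₁ := by
  by_contra hcon
  push_neg at hcon
  obtain ⟨⟨hFnn, hFsum, hFsupp⟩, hFmax⟩ := hF
  obtain ⟨r₀, hr₀pos, hr₀f⟩ := hr
  have hne : u₁ ≠ u₂ := by rintro rfl; exact lt_irrefl _ hr₀f
  set s : (U ≃ Fin (Fintype.card U)) → (U ≃ Fin (Fintype.card U)) :=
    fun r => (Equiv.swap u₁ u₂).trans r with hsdef
  have hsapp : ∀ (r : U ≃ Fin (Fintype.card U)) (u : U), (s r) u = r (Equiv.swap u₁ u₂ u) :=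
    fun r u => rfl
  have hss : ∀ r, s (s r) = r := by
    intro r
    apply Equiv.ext
    intro x
    rw [hsapp, hsapp, Equiv.swap_apply_self]
  have hsinv : Function.Involutive s := hss
  have hreidx : ∀ (φ : (U ≃ Fin (Fintype.card U)) → ℝ), (∑ r, φ (s r)) = ∑ r, φ r :=
    fun φ => Equiv.sum_comp hsinv.toPerm φ
  have hs1 : ∀ r : U ≃ Fin (Fintype.card U), (s r) u₁ = r u₂ := by
    intro r; rw [hsapp, Equiv.swap_apply_left]
  have hs2 : ∀ r : U ≃ Fin (Fintype.card U), (s r) u₂ = r u₁ := by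
    intro r; rw [hsapp, Equiv.swap_apply_right]
  have hs3 : ∀ (r : U ≃ Fin (Fintype.card U)) (u : U), u ≠ u₁ → u ≠ u₂ → (s r) u = r u := by
    intro r u h1 h2; rw [hsapp, Equiv.swap_apply_of_ne_of_ne h1 h2]
  set δ : ℝ := ∑ r : U ≃ Fin (Fintype.card U),
    if f (r u₁) < f (r u₂) then F r * (f (r u₂) - f (r u₁)) else 0 with hδdef
  have hδpos : 0 < δ := by
    rw [hδdef]
    apply Finset.sum_pos'
    · intro r _
      split_ifs with h
      · exact mul_nonneg (hFnn r) (by linarith)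
      · exact le_refl 0
    · exact ⟨r₀, mem_univ r₀, by rw [if_pos hr₀f]; exact mul_pos hr₀pos (by linarith)⟩
  set ε : ℝ := min 1 ((EV f g F u₂ - EV f g F u₁) / (4 * δ)) with hεdef
  have hε0 : 0 < ε := lt_min one_pos (div_pos (by linarith) (by linarith))
  have hε1 : ε ≤ 1 := min_le_left _ _
  have hεδ : 2 * (ε * δ) < EV f g F u₂ - EV f g F u₁ := by
    have h1 : ε ≤ (EV f g F u₂ - EV f g F u₁) / (4 * δ) := min_le_right _ _
    have h2 : ε * (4 * δ) ≤ EV f g F u₂ - EV f g F u₁ :=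
      (le_div_iff₀ (by linarith : (0:ℝ) < 4 * δ)).1 h1
    nlinarith [mul_pos hε0 hδpos]
  set D : (U ≃ Fin (Fintype.card U)) → ℝ := fun r =>
    F r + ε * ((if f (r u₂) < f (r u₁) then F (s r) else 0)
             - (if f (r u₁) < f (r u₂) then F r else 0)) with hDdef
  have hDapp : ∀ r, D r = F r + ε * ((if f (r u₂) < f (r u₁) then F (s r) else 0)
             - (if f (r u₁) < f (r u₂) then F r else 0)) := fun r => rfl
  have hDnn : ∀ r, 0 ≤ D r := by
    intro r
    rw [hDapp]
    rcases lt_trichotomy (f (r u₁)) (f (r u₂)) with h | h | h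
    · rw [if_neg (asymm h), if_pos h]
      nlinarith [hFnn r]
    · rw [if_neg (by rw [h]; exact lt_irrefl _), if_neg (by rw [h]; exact lt_irrefl _)]
      simpa using hFnn r
    · rw [if_pos h, if_neg (asymm h)]
      have := hFnn r
      have := hFnn (s r)
      nlinarith
  have hX : (∑ r : U ≃ Fin (Fintype.card U), (if f (r u₂) < f (r u₁) then F (s r) else 0))
      = ∑ r : U ≃ Fin (Fintype.card U), (if f (r u₁) < f (r u₂) then F r else 0) := by
    calc (∑ r : U ≃ Fin (Fintype.card U), (if f (r u₂) < f (r u₁) then F (s r) else 0))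
        = ∑ r : U ≃ Fin (Fintype.card U),
            (if f ((s r) u₂) < f ((s r) u₁) then F (s (s r)) else 0) :=
          (hreidx (fun r => if f (r u₂) < f (r u₁) then F (s r) else 0)).symm
      _ = ∑ r : U ≃ Fin (Fintype.card U), (if f (r u₁) < f (r u₂) then F r else 0) := by
          refine Finset.sum_congr rfl fun r _ => ?_
          rw [hs1 r, hs2 r, hss r]
  have hDsum : ∑ r : U ≃ Fin (Fintype.card U), D r = 1 := by
    calc ∑ r : U ≃ Fin (Fintype.card U), D r
        = ∑ r : U ≃ Fin (Fintype.card U), (F r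
          + ε * ((if f (r u₂) < f (r u₁) then F (s r) else 0)
               - (if f (r u₁) < f (r u₂) then F r else 0))) :=
          Finset.sum_congr rfl fun r _ => hDapp r
      _ = ∑ r : U ≃ Fin (Fintype.card U), F r
          + ε * ((∑ r : U ≃ Fin (Fintype.card U), (if f (r u₂) < f (r u₁) then F (s r) else 0))
               - ∑ r : U ≃ Fin (Fintype.card U), (if f (r u₁) < f (r u₂) then F r else 0)) := by
          rw [Finset.sum_add_distrib, ← Finset.mul_sum, Finset.sum_sub_distrib]
      _ = 1 := by rw [hX, hFsum]; ring
  have hDsupp : ∀ r, D r ≠ 0 → ValidLU c lb ub r := by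
    intro r hDr
    by_cases hFr : F r = 0
    · by_cases hFsr : F (s r) = 0
      · exfalso
        apply hDr
        rw [hDapp, hFr, hFsr]
        split_ifs <;> ring
      · exact valid_swap hclass r (hFsupp (s r) hFsr)
    · exact hFsupp r hFr
  have hDdist : IsDistribOn (ValidLU c lb ub) D := ⟨hDnn, hDsum, hDsupp⟩
  have hEVgen : ∀ u : U, EV f g D u = EV f g F u
      + ε * (∑ r : U ≃ Fin (Fintype.card U),
          if f (r u₁) < f (r u₂) then F r * (f ((s r) u) - f (r u)) else 0) := by
    intro u
    have expand : ∀ r : U ≃ Fin (Fintype.card U), D r * (f (r u) - g u)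
        = F r * (f (r u) - g u)
          + ε * ((if f (r u₂) < f (r u₁) then F (s r) * (f (r u) - g u) else 0)
               - (if f (r u₁) < f (r u₂) then F r * (f (r u) - g u) else 0)) := by
      intro r
      rw [hDapp]
      split_ifs <;> ring
    have hre : (∑ r : U ≃ Fin (Fintype.card U),
          (if f (r u₂) < f (r u₁) then F (s r) * (f (r u) - g u) else 0))
        = ∑ r : U ≃ Fin (Fintype.card U),
          (if f (r u₁) < f (r u₂) then F r * (f ((s r) u) - g u) else 0) := by
      calc (∑ r : U ≃ Fin (Fintype.card U),
              (if f (r u₂) < f (r u₁) then F (s r) * (f (r u) - g u) else 0))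
          = ∑ r : U ≃ Fin (Fintype.card U),
              (if f ((s r) u₂) < f ((s r) u₁) then F (s (s r)) * (f ((s r) u) - g u) else 0) :=
            (hreidx (fun r => if f (r u₂) < f (r u₁) then F (s r) * (f (r u) - g u) else 0)).symm
        _ = _ := by
            refine Finset.sum_congr rfl fun r _ => ?_
            rw [hs1 r, hs2 r, hss r]
    calc EV f g D u
        = ∑ r : U ≃ Fin (Fintype.card U), D r * (f (r u) - g u) := rfl
      _ = ∑ r : U ≃ Fin (Fintype.card U), (F r * (f (r u) - g u)
          + ε * ((if f (r u₂) < f (r u₁) then F (s r) * (f (r u) - g u) else 0)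
               - (if f (r u₁) < f (r u₂) then F r * (f (r u) - g u) else 0))) :=
          Finset.sum_congr rfl fun r _ => expand r
      _ = ∑ r : U ≃ Fin (Fintype.card U), F r * (f (r u) - g u)
          + ε * ((∑ r : U ≃ Fin (Fintype.card U),
              (if f (r u₂) < f (r u₁) then F (s r) * (f (r u) - g u) else 0))
            - ∑ r : U ≃ Fin (Fintype.card U),
              (if f (r u₁) < f (r u₂) then F r * (f (r u) - g u) else 0)) := by
          rw [Finset.sum_add_distrib, ← Finset.mul_sum, Finset.sum_sub_distrib]
      _ = EV f g F u + ε * (∑ r : U ≃ Fin (Fintype.card U),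
            if f (r u₁) < f (r u₂) then F r * (f ((s r) u) - f (r u)) else 0) := by
          rw [hre, ← Finset.sum_sub_distrib]
          congr 1
          refine congrArg (ε * ·) ?_
          refine Finset.sum_congr rfl fun r _ => ?_
          split_ifs <;> ring
  have hEV1 : EV f g D u₁ = EV f g F u₁ + ε * δ := by
    rw [hEVgen u₁, hδdef]
    congr 2
    refine Finset.sum_congr rfl fun r _ => ?_
    rw [hs1 r]
  have hEV2 : EV f g D u₂ = EV f g F u₂ - ε * δ := by
    rw [hEVgen u₂, hδdef]
    have : (∑ r : U ≃ Fin (Fintype.card U),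
        if f (r u₁) < f (r u₂) then F r * (f ((s r) u₂) - f (r u₂)) else 0)
        = -∑ r : U ≃ Fin (Fintype.card U),
            if f (r u₁) < f (r u₂) then F r * (f (r u₂) - f (r u₁)) else 0 := by
      rw [← Finset.sum_neg_distrib]
      refine Finset.sum_congr rfl fun r _ => ?_
      rw [hs2 r]
      split_ifs <;> ring
    rw [this]; ring
  have hEVo : ∀ u : U, u ≠ u₁ → u ≠ u₂ → EV f g D u = EV f g F u := by
    intro u h1 h2
    rw [hEVgen u]
    have : (∑ r : U ≃ Fin (Fintype.card U),
        if f (r u₁) < f (r u₂) then F r * (f ((s r) u) - f (r u)) else 0) = 0 := by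
      apply Finset.sum_eq_zero
      intro r _
      rw [hs3 r u h1 h2]
      split_ifs <;> ring
    rw [this]; ring
  have hlex := hFmax D hDdist
  refine key_lex (fun i => EV f g F ((Fintype.equivFin U).symm i))
    (fun i => EV f g D ((Fintype.equivFin U).symm i))
    ((Fintype.equivFin U) u₁) ((Fintype.equivFin U) u₂)
    (fun h => hne ((Fintype.equivFin U).injective h))
    (a := EV f g F u₁) (b := EV f g F u₂) (ti := ε * δ)
    ?_ ?_ ?_ ?_ ?_ (mul_pos hε0 hδpos) (by linarith) hlex
  · intro i h1 h2
    exact (hEVo ((Fintype.equivFin U).symm i)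
      (fun h => h1 (by rw [← h, Equiv.apply_symm_apply]))
      (fun h => h2 (by rw [← h, Equiv.apply_symm_apply]))).symm
  · simp only [Equiv.symm_apply_apply]
  · simp only [Equiv.symm_apply_apply]
  · simp only [Equiv.symm_apply_apply]; exact hEV1
  · simp only [Equiv.symm_apply_apply]; exact hEV2
end

section
/- Let λ : 𝒰 → ℝ. In the setting of valid rankings with only upper-bound constraints, there exists a distribution D over 𝒮 such that D[u] ≥ λ(u) for all u ∈ 𝒰 if and only if for every subset X ⊆ 𝒰 it holds that max_{r∈𝒮} ∑_{u∈X} V(r,u) ≥ ∑_{u∈X} λ(u). -/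
open Finset

/-- A ranking is valid if, for every prefix length `i` and class `k`, the number of
individuals of class `k` in the top `i` positions is at most `ub i k`. -/
def ValidUB {U : Type*} [Fintype U] {t : ℕ} (c : U → Fin t)
    (ub : Fin (Fintype.card U) → Fin t → ℕ) (r : U ≃ Fin (Fintype.card U)) : Prop :=
  ∀ i : Fin (Fintype.card U), ∀ k : Fin t,
    (Finset.univ.filter (fun u => c u = k ∧ r u ≤ i)).card ≤ ub i k

/-- `Hfun Vld f g E` is the maximum over valid rankings `r` of `∑_{u ∈ E} (f (r u) - g u)`. -/
noncomputable def Hfun {U : Type*} [Fintype U] [DecidableEq U]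
    (Vld : (U ≃ Fin (Fintype.card U)) → Prop)
    (f : Fin (Fintype.card U) → ℝ) (g : U → ℝ) (E : Finset U) : ℝ :=
  sSup ((fun r : U ≃ Fin (Fintype.card U) => ∑ u ∈ E, (f (r u) - g u)) '' {r | Vld r})

set_option linter.unusedSectionVars false
set_option maxHeartbeats 1000000

section Core
variable {U : Type*} [Fintype U] [DecidableEq U] {t : ℕ}

/-- number of elements of `X` in the first `i` positions of `r` (positions `0..i-1`). -/
def cntX (X : Finset U) (r : U ≃ Fin (Fintype.card U)) (i : ℕ) : ℕ :=
  (X.filter fun x => (r x : ℕ) < i).card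

/-- number of class-`k` elements in the first `p` positions. -/
def pcnt (c : U → Fin t) (r : U ≃ Fin (Fintype.card U)) (k : Fin t) (p : ℕ) : ℕ :=
  (univ.filter fun x => c x = k ∧ (r x : ℕ) < p).card

lemma c_swap {c : U → Fin t} {u v : U} (h : c u = c v) (x : U) :
    c (Equiv.swap u v x) = c x := by
  rcases eq_or_ne x u with rfl | hxu
  · rw [Equiv.swap_apply_left]; exact h.symm
  rcases eq_or_ne x v with rfl | hxv
  · rw [Equiv.swap_apply_right]; exact h
  · rw [Equiv.swap_apply_of_ne_of_ne hxu hxv]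

lemma filter_swap_card {c : U → Fin t} {u v : U} (hc : c u = c v) (k : Fin t)
    (Q : Fin (Fintype.card U) → Prop) [DecidablePred Q] (r : U ≃ Fin (Fintype.card U)) :
    (univ.filter fun x => c x = k ∧ Q (((Equiv.swap u v).trans r) x)).card
      = (univ.filter fun x => c x = k ∧ Q (r x)).card := by
  have himg : (univ.filter fun x => c x = k ∧ Q (((Equiv.swap u v).trans r) x))
      = (univ.filter fun x => c x = k ∧ Q (r x)).image (Equiv.swap u v) := by
    ext y
    simp only [mem_filter, mem_image, mem_univ, true_and]
    constructor
    · intro ⟨h1, h2⟩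
      exact ⟨Equiv.swap u v y, ⟨by rw [c_swap hc]; exact h1, h2⟩, Equiv.swap_apply_self u v y⟩
    · rintro ⟨x, ⟨h1, h2⟩, rfl⟩
      refine ⟨by rw [c_swap hc]; exact h1, ?_⟩
      show Q (r (Equiv.swap u v (Equiv.swap u v x)))
      rw [Equiv.swap_apply_self]; exact h2
  rw [himg, Finset.card_image_of_injective _ (Equiv.injective _)]

lemma valid_swap_sameClass {c : U → Fin t} {ub : Fin (Fintype.card U) → Fin t → ℕ}
    {r : U ≃ Fin (Fintype.card U)} (h : ValidUB c ub r) {u v : U} (hc : c u = c v) :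
    ValidUB c ub ((Equiv.swap u v).trans r) := by
  intro i k
  rw [filter_swap_card hc k (fun z => z ≤ i) r]
  exact h i k

lemma pcnt_swap_sameClass {c : U → Fin t} {u v : U} (hc : c u = c v)
    (r : U ≃ Fin (Fintype.card U)) (k : Fin t) (p : ℕ) :
    pcnt c ((Equiv.swap u v).trans r) k p = pcnt c r k p :=
  filter_swap_card hc k (fun z => (z : ℕ) < p) r
/-- Moving `u` from a later position up to the position of `v` (which moves back to `u`'s
position) keeps the ranking valid, provided there is no class-`c u` element at a position
in `[r v, r u)` and class `c u` is "open" at prefix `r v`. -/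
lemma valid_swap_move {c : U → Fin t} {ub : Fin (Fintype.card U) → Fin t → ℕ}
    {r : U ≃ Fin (Fintype.card U)} (h : ValidUB c ub r) {u v : U}
    (hcv : c v ≠ c u) (hlt : (r v : ℕ) < (r u : ℕ))
    (hno : ∀ x, c x = c u → ¬((r v : ℕ) ≤ (r x : ℕ) ∧ (r x : ℕ) < (r u : ℕ)))
    (hopen : ∀ i : Fin (Fintype.card U), (r v : ℕ) ≤ (i : ℕ) →
      pcnt c r (c u) (r v) < ub i (c u)) :
    ValidUB c ub ((Equiv.swap u v).trans r) := by
  have huv : u ≠ v := fun h' => hcv (by rw [h'])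
  intro i k
  set σ := (Equiv.swap u v).trans r with hσ
  have hσu : σ u = r v := by simp [hσ, Equiv.swap_apply_left]
  have hσv : σ v = r u := by simp [hσ, Equiv.swap_apply_right]
  have hσx : ∀ x, x ≠ u → x ≠ v → σ x = r x := by
    intro x h1 h2; simp [hσ, Equiv.swap_apply_of_ne_of_ne h1 h2]
  by_cases hku : k = c u
  · subst hku
    by_cases hiv : (r v : ℕ) ≤ (i : ℕ)
    · by_cases hiu : (r u : ℕ) ≤ (i : ℕ)
      · -- sets coincide (u in both, v in neither)
        have : (univ.filter fun x => c x = c u ∧ σ x ≤ i)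
            = (univ.filter fun x => c x = c u ∧ r x ≤ i) := by
          ext x
          simp only [mem_filter, mem_univ, true_and]
          rcases eq_or_ne x u with rfl | hxu
          · rw [hσu]
            constructor
            · intro ⟨h1, _⟩; exact ⟨h1, by rw [Fin.le_def]; omega⟩
            · intro ⟨h1, _⟩; exact ⟨h1, by rw [Fin.le_def]; omega⟩
          rcases eq_or_ne x v with rfl | hxv
          · exact ⟨fun ⟨h1, _⟩ => absurd h1 hcv, fun ⟨h1, _⟩ => absurd h1 hcv⟩
          · rw [hσx x hxu hxv]
        rw [this]; exact h i (c u)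
      · -- u enters at position r v, no other class-c u elements ≤ i
        push_neg at hiu
        have hsub : (univ.filter fun x => c x = c u ∧ σ x ≤ i)
            ⊆ insert u (univ.filter fun x => c x = c u ∧ (r x : ℕ) < (r v : ℕ)) := by
          intro x hx
          simp only [mem_filter, mem_univ, true_and] at hx
          obtain ⟨h1, h2⟩ := hx
          rcases eq_or_ne x u with rfl | hxu
          · exact mem_insert_self _ _
          have hxv : x ≠ v := fun h' => hcv (h' ▸ h1)
          rw [hσx x hxu hxv] at h2
          refine mem_insert_of_mem ?_
          simp only [mem_filter, mem_univ, true_and]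
          refine ⟨h1, ?_⟩
          by_contra hge
          push_neg at hge
          exact hno x h1 ⟨hge, by rw [Fin.le_def] at h2; omega⟩
        calc (univ.filter fun x => c x = c u ∧ σ x ≤ i).card
            ≤ (insert u (univ.filter fun x => c x = c u ∧ (r x : ℕ) < (r v : ℕ))).card :=
              Finset.card_le_card hsub
          _ ≤ pcnt c r (c u) (r v) + 1 := Finset.card_insert_le _ _
          _ ≤ ub i (c u) := by have := hopen i hiv; omega
    · -- i < r v : sets coincide
      push_neg at hiv
      have : (univ.filter fun x => c x = c u ∧ σ x ≤ i)
          = (univ.filter fun x => c x = c u ∧ r x ≤ i) := by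
        ext x
        simp only [mem_filter, mem_univ, true_and]
        rcases eq_or_ne x u with rfl | hxu
        · rw [hσu]
          constructor
          · intro ⟨h1, h2⟩; rw [Fin.le_def] at h2; omega
          · intro ⟨h1, h2⟩; rw [Fin.le_def] at h2; omega
        rcases eq_or_ne x v with rfl | hxv
        · exact ⟨fun ⟨h1, _⟩ => absurd h1 hcv, fun ⟨h1, _⟩ => absurd h1 hcv⟩
        · rw [hσx x hxu hxv]
      rw [this]; exact h i (c u)
  · by_cases hkv : k = c v
    · subst hkv
      -- the new set is a subset of the old one
      have hsub : (univ.filter fun x => c x = c v ∧ σ x ≤ i)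
          ⊆ (univ.filter fun x => c x = c v ∧ r x ≤ i) := by
        intro x hx
        simp only [mem_filter, mem_univ, true_and] at hx ⊢
        obtain ⟨h1, h2⟩ := hx
        rcases eq_or_ne x u with rfl | hxu
        · exact absurd h1.symm hcv
        rcases eq_or_ne x v with rfl | hxv
        · rw [hσv] at h2
          refine ⟨h1, ?_⟩
          rw [Fin.le_def] at h2 ⊢; omega
        · rw [hσx x hxu hxv] at h2; exact ⟨h1, h2⟩
      exact le_trans (Finset.card_le_card hsub) (h i (c v))
    · -- unaffected class
      have : (univ.filter fun x => c x = k ∧ σ x ≤ i)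
          = (univ.filter fun x => c x = k ∧ r x ≤ i) := by
        ext x
        simp only [mem_filter, mem_univ, true_and]
        rcases eq_or_ne x u with rfl | hxu
        · exact ⟨fun ⟨h1, _⟩ => absurd h1.symm (Ne.symm (by exact fun h' => hku h'.symm)),
            fun ⟨h1, _⟩ => absurd h1 (by exact fun h' => hku h'.symm)⟩
        rcases eq_or_ne x v with rfl | hxv
        · exact ⟨fun ⟨h1, _⟩ => absurd h1 (fun h' => hkv h'.symm), fun ⟨h1, _⟩ => absurd h1 (fun h' => hkv h'.symm)⟩
        · rw [hσx x hxu hxv]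
      rw [this]; exact h i k
lemma cntX_eq_sum (X : Finset U) (r : U ≃ Fin (Fintype.card U)) (i : ℕ) :
    cntX X r i = ∑ x ∈ X, if (r x : ℕ) < i then 1 else 0 := by
  rw [cntX, Finset.card_filter]

lemma cntX_swap_le (X : Finset U) {u v : U} (hne : u ≠ v) (hvu : v ∈ X → u ∈ X)
    {r : U ≃ Fin (Fintype.card U)} (hpos : (r v : ℕ) < (r u : ℕ)) (i : ℕ) :
    cntX X r i ≤ cntX X ((Equiv.swap u v).trans r) i := by
  set σ := (Equiv.swap u v).trans r with hσ
  have hσu : σ u = r v := by simp [hσ, Equiv.swap_apply_left]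
  have hσv : σ v = r u := by simp [hσ, Equiv.swap_apply_right]
  have hσx : ∀ x, x ≠ u → x ≠ v → σ x = r x := by
    intro x h1 h2; simp [hσ, Equiv.swap_apply_of_ne_of_ne h1 h2]
  rw [cntX_eq_sum, cntX_eq_sum]
  by_cases hu : u ∈ X
  · by_cases hv : v ∈ X
    · have hvX : v ∈ X.erase u := Finset.mem_erase.2 ⟨fun h => hne h.symm, hv⟩
      rw [← Finset.add_sum_erase _ _ hu, ← Finset.add_sum_erase _ _ hvX,
          ← Finset.add_sum_erase _ (fun x => if (σ x : ℕ) < i then 1 else 0) hu,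
          ← Finset.add_sum_erase _ _ hvX]
      have hrest : ∀ x ∈ (X.erase u).erase v,
          (if (r x : ℕ) < i then 1 else 0) = (if (σ x : ℕ) < i then 1 else 0) := by
        intro x hx
        rw [Finset.mem_erase, Finset.mem_erase] at hx
        rw [hσx x hx.2.1 hx.1]
      rw [Finset.sum_congr rfl hrest, hσu, hσv]
      omega
    · rw [← Finset.add_sum_erase _ _ hu,
          ← Finset.add_sum_erase _ (fun x => if (σ x : ℕ) < i then 1 else 0) hu]
      have hrest : ∀ x ∈ X.erase u,
          (if (r x : ℕ) < i then 1 else 0) = (if (σ x : ℕ) < i then 1 else 0) := by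
        intro x hx
        rw [Finset.mem_erase] at hx
        have hxv : x ≠ v := fun h => hv (h ▸ hx.2)
        rw [hσx x hx.1 hxv]
      rw [Finset.sum_congr rfl hrest, hσu]
      have : (if (r u : ℕ) < i then 1 else 0) ≤ (if (r v : ℕ) < i then (1:ℕ) else 0) := by
        split_ifs <;> omega
      omega
  · have hv : v ∉ X := fun h => hu (hvu h)
    refine le_of_eq (Finset.sum_congr rfl ?_)
    intro x hx
    have hxu : x ≠ u := fun h => hu (h ▸ hx)
    have hxv : x ≠ v := fun h => hv (h ▸ hx)
    rw [hσx x hxu hxv]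

end Core
section Core2
variable {U : Type*} [Fintype U] [DecidableEq U] {t : ℕ}

def openCl (c : U → Fin t) (ub : Fin (Fintype.card U) → Fin t → ℕ)
    (r : U ≃ Fin (Fintype.card U)) (p : ℕ) (k : Fin t) : Prop :=
  ∀ i : Fin (Fintype.card U), p ≤ (i : ℕ) → pcnt c r k p < ub i k

def LocGreedy (c : U → Fin t) (ub : Fin (Fintype.card U) → Fin t → ℕ) (lvl : U → ℕ)
    (r : U ≃ Fin (Fintype.card U)) : Prop :=
  ∀ (p : Fin (Fintype.card U)) (x : U), (p : ℕ) ≤ (r x : ℕ) →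
    openCl c ub r (p : ℕ) (c x) → lvl x ≤ lvl (r.symm p)

/-- the class of the occupant of position `p` is open at prefix `p`. -/
lemma open_of_occupant {c : U → Fin t} {ub : Fin (Fintype.card U) → Fin t → ℕ}
    {r : U ≃ Fin (Fintype.card U)} (h : ValidUB c ub r) (y : U) :
    openCl c ub r (r y : ℕ) (c y) := by
  intro i hi
  have hsub : insert y (univ.filter fun x => c x = c y ∧ (r x : ℕ) < (r y : ℕ))
      ⊆ (univ.filter fun x => c x = c y ∧ r x ≤ i) := by
    intro z hz
    rcases Finset.mem_insert.1 hz with rfl | hz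
    · refine mem_filter.2 ⟨mem_univ _, rfl, ?_⟩
      rw [Fin.le_def]; omega
    · obtain ⟨-, h1, h2⟩ := mem_filter.1 hz
      refine mem_filter.2 ⟨mem_univ _, h1, ?_⟩
      rw [Fin.le_def]; omega
  have hy : y ∉ (univ.filter fun x => c x = c y ∧ (r x : ℕ) < (r y : ℕ)) := by
    simp only [mem_filter, mem_univ, true_and]
    omega
  have h1 := Finset.card_le_card hsub
  rw [Finset.card_insert_of_notMem hy] at h1
  have h2 := h i (c y)
  unfold pcnt
  omega

noncomputable def phi (lvl : U → ℕ) (r : U ≃ Fin (Fintype.card U)) : ℝ :=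
  ∑ x : U, (lvl x : ℝ) * 2 ^ (Fintype.card U - 1 - (r x : ℕ))

lemma phi_lt (lvl : U → ℕ) {r : U ≃ Fin (Fintype.card U)} {u v : U}
    (hpos : (r v : ℕ) < (r u : ℕ)) (hlvl : lvl v < lvl u) :
    phi lvl r < phi lvl ((Equiv.swap u v).trans r) := by
  have hne : u ≠ v := by intro h; rw [h] at hpos; omega
  set σ := (Equiv.swap u v).trans r with hσ
  have hσu : σ u = r v := by simp [hσ, Equiv.swap_apply_left]
  have hσv : σ v = r u := by simp [hσ, Equiv.swap_apply_right]
  have hσx : ∀ x, x ≠ u → x ≠ v → σ x = r x := by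
    intro x h1 h2; simp [hσ, Equiv.swap_apply_of_ne_of_ne h1 h2]
  have hu : u ∈ (univ : Finset U) := mem_univ u
  have hv : v ∈ (univ : Finset U).erase u := Finset.mem_erase.2 ⟨hne.symm, mem_univ v⟩
  unfold phi
  rw [← Finset.add_sum_erase _ _ hu, ← Finset.add_sum_erase _ _ hv,
      ← Finset.add_sum_erase _ (fun x => (lvl x : ℝ) * 2 ^ (Fintype.card U - 1 - (σ x : ℕ))) hu,
      ← Finset.add_sum_erase _ _ hv]
  have hrest : ∀ x ∈ ((univ : Finset U).erase u).erase v,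
      (lvl x : ℝ) * 2 ^ (Fintype.card U - 1 - (r x : ℕ))
        = (lvl x : ℝ) * 2 ^ (Fintype.card U - 1 - (σ x : ℕ)) := by
    intro x hx
    rw [Finset.mem_erase, Finset.mem_erase] at hx
    rw [hσx x hx.2.1 hx.1]
  rw [Finset.sum_congr rfl hrest, hσu, hσv]
  have hb : Fintype.card U - 1 - (r u : ℕ) < Fintype.card U - 1 - (r v : ℕ) := by
    have := (r u).isLt
    omega
  have hpow : (2 : ℝ) ^ (Fintype.card U - 1 - (r u : ℕ))
      < 2 ^ (Fintype.card U - 1 - (r v : ℕ)) :=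
    pow_lt_pow_right₀ one_lt_two hb
  have hl : (lvl v : ℝ) < (lvl u : ℝ) := by exact_mod_cast hlvl
  have key : 0 < ((lvl u : ℝ) - lvl v) * (2 ^ (Fintype.card U - 1 - (r v : ℕ))
      - 2 ^ (Fintype.card U - 1 - (r u : ℕ))) := by
    apply mul_pos <;> linarith
  nlinarith [key]

lemma exists_locGreedy (c : U → Fin t) (ub : Fin (Fintype.card U) → Fin t → ℕ)
    (hS : ∃ r, ValidUB c ub r) (lvl : U → ℕ) :
    ∃ r, ValidUB c ub r ∧ LocGreedy c ub lvl r := by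
  classical
  set S : Finset (U ≃ Fin (Fintype.card U)) := univ.filter (fun r => ValidUB c ub r) with hSdef
  have hSne : S.Nonempty := by
    obtain ⟨r, hr⟩ := hS
    exact ⟨r, by simp [hSdef, hr]⟩
  obtain ⟨rs, hrsS, hmax⟩ := S.exists_max_image (phi lvl) hSne
  have hrs : ValidUB c ub rs := by simpa [hSdef] using hrsS
  refine ⟨rs, hrs, ?_⟩
  intro p x hpx hop
  by_contra hcon
  push_neg at hcon
  set w := rs.symm p with hw
  have hrw : rs w = p := Equiv.apply_symm_apply _ _
  have hxw : x ≠ w := by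
    intro h; rw [h] at hcon; omega
  have hpltx : (p : ℕ) < (rs x : ℕ) := by
    rcases lt_or_eq_of_le hpx with h | h
    · exact h
    · exfalso; apply hxw
      have hx : rs x = p := Fin.ext h.symm
      rw [hw, ← hx, Equiv.symm_apply_apply]
  by_cases hcxw : c x = c w
  · have hval := valid_swap_sameClass hrs hcxw
    have hlt := phi_lt lvl (u := x) (v := w) (r := rs) (by rw [hrw]; exact hpltx) hcon
    have hle : phi lvl ((Equiv.swap x w).trans rs) ≤ phi lvl rs :=
      hmax _ (by simp [hSdef, hval])
    linarith
  · set P : Finset U := univ.filter (fun y => c y = c x ∧ (p : ℕ) ≤ (rs y : ℕ)) with hP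
    have hxP : x ∈ P := mem_filter.2 ⟨mem_univ _, rfl, hpx⟩
    obtain ⟨y₀, hy₀P, hy₀min⟩ := P.exists_min_image (fun y => (rs y : ℕ)) ⟨x, hxP⟩
    obtain ⟨-, hy₀c, hy₀p⟩ := mem_filter.1 hy₀P
    have hy₀ne : (p : ℕ) < (rs y₀ : ℕ) := by
      rcases lt_or_eq_of_le hy₀p with h | h
      · exact h
      · exfalso
        have hy : y₀ = w := by
          have hx : rs y₀ = p := Fin.ext h.symm
          rw [hw, ← hx, Equiv.symm_apply_apply]
        rw [hy] at hy₀c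
        exact hcxw hy₀c.symm
    by_cases hly : lvl y₀ < lvl x
    · have hyx : y₀ ≠ x := by intro h; rw [h] at hly; omega
      have hlt' : (rs y₀ : ℕ) < (rs x : ℕ) := by
        have h1 : (rs y₀ : ℕ) ≤ (rs x : ℕ) := hy₀min x hxP
        rcases lt_or_eq_of_le h1 with h | h
        · exact h
        · exact absurd (rs.injective (Fin.ext h)) hyx
      have hval := valid_swap_sameClass hrs (u := x) (v := y₀) hy₀c.symm
      have hlt := phi_lt lvl (u := x) (v := y₀) (r := rs) hlt' hly
      have hle : phi lvl ((Equiv.swap x y₀).trans rs) ≤ phi lvl rs :=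
        hmax _ (by simp [hSdef, hval])
      linarith
    · push_neg at hly
      have hcwy : c w ≠ c y₀ := by rw [hy₀c]; exact fun h => hcxw h.symm
      have hval : ValidUB c ub ((Equiv.swap y₀ w).trans rs) := by
        apply valid_swap_move hrs hcwy (by rw [hrw]; exact hy₀ne)
        · intro z hz hcontra
          rw [hrw] at hcontra
          have hzP : z ∈ P := mem_filter.2 ⟨mem_univ _, hz.trans hy₀c, hcontra.1⟩
          have := hy₀min z hzP
          omega
        · intro i hi
          rw [hrw] at hi ⊢
          rw [hy₀c]
          exact hop i hi
      have hlt := phi_lt lvl (u := y₀) (v := w) (r := rs)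
        (by rw [hrw]; exact hy₀ne) (by omega)
      have hle : phi lvl ((Equiv.swap y₀ w).trans rs) ≤ phi lvl rs :=
        hmax _ (by simp [hSdef, hval])
      linarith

end Core2
section Core3
variable {U : Type*} [Fintype U] [DecidableEq U] {t : ℕ}

lemma agree_apply {s r : U ≃ Fin (Fintype.card U)} {p : ℕ}
    (hag : ∀ i : Fin (Fintype.card U), (i : ℕ) < p → s.symm i = r.symm i)
    (x : U) (hx : (s x : ℕ) < p) : r x = s x := by
  have h1 := hag (s x) hx
  rw [Equiv.symm_apply_apply] at h1
  exact (Equiv.apply_eq_iff_eq_symm_apply r).2 h1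

lemma agree_pcnt {c : U → Fin t} {s r : U ≃ Fin (Fintype.card U)} {p : ℕ}
    (hag : ∀ i : Fin (Fintype.card U), (i : ℕ) < p → s.symm i = r.symm i) (k : Fin t) :
    pcnt c s k p = pcnt c r k p := by
  have hag' : ∀ i : Fin (Fintype.card U), (i : ℕ) < p → r.symm i = s.symm i :=
    fun i hi => (hag i hi).symm
  unfold pcnt
  congr 1
  ext x
  simp only [mem_filter, mem_univ, true_and]
  constructor
  · rintro ⟨h1, h2⟩
    exact ⟨h1, by rw [agree_apply hag x h2]; exact h2⟩
  · rintro ⟨h1, h2⟩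
    exact ⟨h1, by rw [agree_apply hag' x h2]; exact h2⟩

lemma cntX_le_of_locGreedy {c : U → Fin t} {ub : Fin (Fintype.card U) → Fin t → ℕ}
    {lvl : U → ℕ} {rs : U ≃ Fin (Fintype.card U)}
    (hrs : ValidUB c ub rs) (hg : LocGreedy c ub lvl rs) :
    ∀ s, ValidUB c ub s → ∀ j i,
      cntX (univ.filter fun x => j < lvl x) s i ≤ cntX (univ.filter fun x => j < lvl x) rs i := by
  classical
  have main : ∀ d : ℕ, ∀ s, ValidUB c ub s →
      (∀ i : Fin (Fintype.card U), (i : ℕ) < Fintype.card U - d → s.symm i = rs.symm i) →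
      ∀ j i, cntX (univ.filter fun x => j < lvl x) s i
        ≤ cntX (univ.filter fun x => j < lvl x) rs i := by
    intro d
    induction d with
    | zero =>
      intro s _ hag j i
      have hs : s = rs := by
        have h1 : s.symm = rs.symm := Equiv.ext fun i => hag i (by omega)
        have h2 : s.symm.symm = rs.symm.symm := by rw [h1]
        simpa using h2
      rw [hs]
    | succ d IH =>
      intro s hs hag j
      by_cases heq : Fintype.card U - d = Fintype.card U - (d + 1)
      · exact IH s hs (fun i hi => hag i (by omega)) j
      · set p : ℕ := Fintype.card U - (d + 1) with hpdef
        have hpn : p < Fintype.card U := by omega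
        have hnd : Fintype.card U - d = p + 1 := by omega
        set pF : Fin (Fintype.card U) := ⟨p, hpn⟩ with hpF
        have hpFval : (pF : ℕ) = p := rfl
        set u := rs.symm pF with hu
        have hru : (rs u : ℕ) = p := by rw [hu, Equiv.apply_symm_apply]
        by_cases hsu : (s u : ℕ) = p
        · -- agreement already extends one more step
          refine IH s hs (fun i hi => ?_) j
          rcases Nat.lt_or_ge (i : ℕ) p with h | h
          · exact hag i h
          · have hip : i = pF := Fin.ext (by omega)
            have hsupF : s u = pF := Fin.ext (by omega)
            calc s.symm i = s.symm pF := by rw [hip]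
              _ = u := by rw [← hsupF, Equiv.symm_apply_apply]
              _ = rs.symm pF := hu
              _ = rs.symm i := by rw [hip]
        · -- the occupant of position p differs; perform swaps
          have hq : p < (s u : ℕ) := by
            rcases Nat.lt_or_ge (s u : ℕ) p with h | h
            · exfalso
              have := agree_apply hag u h
              rw [this] at hru; omega
            · omega
          set k := c u with hk
          have open_rs : openCl c ub rs p k := by
            have := open_of_occupant hrs u
            rwa [hru] at this
          set P : Finset U := univ.filter (fun y => c y = k ∧ p ≤ (s y : ℕ)) with hP
          have huP : u ∈ P := mem_filter.2 ⟨mem_univ _, rfl, le_of_lt hq⟩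
          obtain ⟨y₀, hy₀P, hy₀min⟩ := P.exists_min_image (fun y => (s y : ℕ)) ⟨u, huP⟩
          obtain ⟨-, hy₀c, hy₀p⟩ := mem_filter.1 hy₀P
          set q0 := (s y₀ : ℕ) with hq0def
          have hq0q : q0 ≤ (s u : ℕ) := hy₀min u huP
          -- y₀'s rs-position is ≥ p
          have hy₀rs : p ≤ (rs y₀ : ℕ) := by
            by_contra hcon
            push_neg at hcon
            have := agree_apply (fun i hi => (hag i hi).symm) y₀ hcon
            omega
          have hlvly₀ : lvl y₀ ≤ lvl u := by
            have := hg pF y₀ hy₀rs (by rw [hy₀c]; exact open_rs)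
            rwa [← hu] at this
          set s1 := (Equiv.swap u y₀).trans s with hs1def
          have hs1u : (s1 u : ℕ) = q0 := by
            simp only [hs1def, Equiv.trans_apply, Equiv.swap_apply_left, hq0def]
          have hs1 : ValidUB c ub s1 := valid_swap_sameClass hs hy₀c.symm
          have hcnt1 : ∀ i, cntX (univ.filter fun x => j < lvl x) s i
              ≤ cntX (univ.filter fun x => j < lvl x) s1 i := by
            intro i
            by_cases hyu : y₀ = u
            · have : s1 = s := by
                rw [hs1def, hyu, Equiv.swap_self]
                exact Equiv.ext fun x => rfl
              rw [this]
            · refine cntX_swap_le _ (fun h => hyu h.symm) ?_ ?_ i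
              · intro hy
                simp only [mem_filter, mem_univ, true_and] at hy ⊢
                omega
              · have h1 : (s y₀ : ℕ) ≤ (s u : ℕ) := hq0q
                rcases lt_or_eq_of_le h1 with h | h
                · exact h
                · exact absurd (s.injective (Fin.ext h)) hyu
          -- s1 agrees with rs below p
          have hag1 : ∀ i : Fin (Fintype.card U), (i : ℕ) < p → s1.symm i = rs.symm i := by
            intro i hi
            have hsymm : s1.symm i = Equiv.swap u y₀ (s.symm i) := by
              simp [hs1def]
            rw [hsymm, hag i hi]
            have hz1 : rs.symm i ≠ u := by
              intro h
              have : rs u = i := by rw [← h, Equiv.apply_symm_apply]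
              rw [this] at hru; omega
            have hz2 : rs.symm i ≠ y₀ := by
              intro h
              have : rs y₀ = i := by rw [← h, Equiv.apply_symm_apply]
              rw [this] at hy₀rs; omega
            rw [Equiv.swap_apply_of_ne_of_ne hz1 hz2]
          -- min property for s1
          have hmin1 : ∀ z, c z = k → p ≤ (s1 z : ℕ) → q0 ≤ (s1 z : ℕ) := by
            intro z hz hpz
            have hz' : s1 z = s (Equiv.swap u y₀ z) := rfl
            have hcz' : c (Equiv.swap u y₀ z) = c z := c_swap hy₀c.symm z
            have : Equiv.swap u y₀ z ∈ P := by
              refine mem_filter.2 ⟨mem_univ _, ?_, ?_⟩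
              · rw [hcz']; exact hz
              · rw [← hz']; exact hpz
            have := hy₀min _ this
            rw [← hz'] at this
            exact this
          have hpcnt1 : ∀ k', pcnt c s1 k' p = pcnt c rs k' p := fun k' => agree_pcnt hag1 k'
          by_cases hq0p : q0 = p
          · -- u is now at position p, agreement extends
            have hkey : s1.symm pF = rs.symm pF := by
              have h1 : s1 u = pF := Fin.ext (by omega)
              calc s1.symm pF = s1.symm (s1 u) := by rw [h1]
                _ = u := Equiv.symm_apply_apply _ _
                _ = rs.symm pF := hu
            have hend := IH s1 hs1 (fun i hi => by
              rcases Nat.lt_or_ge (i : ℕ) p with h | h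
              · exact hag1 i h
              · have hip : i = pF := Fin.ext (by omega)
                rw [hip]; exact hkey) j
            exact fun i => le_trans (hcnt1 i) (hend i)
          · have hpq0 : p < q0 := lt_of_le_of_ne hy₀p (Ne.symm hq0p)
            set v := s1.symm pF with hv
            have hs1v : (s1 v : ℕ) = p := by rw [hv, Equiv.apply_symm_apply]
            have hvu : v ≠ u := by
              intro h
              rw [h] at hs1v; omega
            have hcv : c v ≠ k := by
              intro h
              have := hmin1 v h (by omega)
              omega
            have hrsv : p ≤ (rs v : ℕ) := by
              by_contra hcon
              push_neg at hcon
              have h1 : s1.symm (rs v) = rs.symm (rs v) := hag1 (rs v) hcon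
              rw [Equiv.symm_apply_apply] at h1
              have : s1 v = rs v := by
                conv_lhs => rw [← h1]
                rw [Equiv.apply_symm_apply]
              rw [this] at hs1v; omega
            have hlvlv : lvl v ≤ lvl u := by
              have hov : openCl c ub rs p (c v) := by
                intro i hi
                have h1 := open_of_occupant hs1 v i (by omega)
                rw [hs1v] at h1
                rwa [hpcnt1 (c v)] at h1
              have := hg pF v hrsv hov
              rwa [← hu] at this
            set s2 := (Equiv.swap u v).trans s1 with hs2def
            have hs2 : ValidUB c ub s2 := by
              refine valid_swap_move hs1 (by rw [← hk]; exact hcv) (by omega) ?_ ?_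
              · intro z hz hcontra
                rw [hs1v] at hcontra
                have := hmin1 z (hz.trans hk.symm) hcontra.1
                rw [hs1u] at hcontra
                omega
              · intro i hi
                rw [hs1v] at hi ⊢
                rw [hpcnt1]
                exact open_rs i hi
            have hcnt2 : ∀ i, cntX (univ.filter fun x => j < lvl x) s1 i
                ≤ cntX (univ.filter fun x => j < lvl x) s2 i := by
              intro i
              refine cntX_swap_le _ (fun h => hvu h.symm) ?_ (by omega) i
              intro hy
              simp only [mem_filter, mem_univ, true_and] at hy ⊢
              omega
            -- s2 agrees with rs below p+1
            have hag2 : ∀ i : Fin (Fintype.card U), (i : ℕ) < p + 1 → s2.symm i = rs.symm i := by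
              intro i hi
              rcases Nat.lt_or_ge (i : ℕ) p with h | h
              · have hsymm : s2.symm i = Equiv.swap u v (s1.symm i) := by simp [hs2def]
                rw [hsymm, hag1 i h]
                have hz1 : rs.symm i ≠ u := by
                  intro hh
                  have : rs u = i := by rw [← hh, Equiv.apply_symm_apply]
                  rw [this] at hru; omega
                have hz2 : rs.symm i ≠ v := by
                  intro hh
                  have : rs v = i := by rw [← hh, Equiv.apply_symm_apply]
                  rw [this] at hrsv; omega
                rw [Equiv.swap_apply_of_ne_of_ne hz1 hz2]
              · have hip : i = pF := Fin.ext (by omega)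
                have h1 : s2 u = pF := by
                  have h2 : s2 u = s1 v := by
                    simp only [hs2def, Equiv.trans_apply, Equiv.swap_apply_left]
                  rw [h2]; exact Fin.ext hs1v
                calc s2.symm i = s2.symm pF := by rw [hip]
                  _ = u := by rw [← h1, Equiv.symm_apply_apply]
                  _ = rs.symm pF := hu
                  _ = rs.symm i := by rw [hip]
            have hend := IH s2 hs2 (fun i hi => hag2 i (by omega)) j
            exact fun i => le_trans (hcnt1 i) (le_trans (hcnt2 i) (hend i))
  intro s hvs j i
  exact main (Fintype.card U) s hvs (fun i hi => absurd hi (by omega)) j i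

end Core3
section Core4
variable {U : Type*} [Fintype U] [DecidableEq U]

lemma abel_aux (f : ℕ → ℝ) (hdec : ∀ i, f (i + 1) ≤ f i) (D : ℕ → ℝ)
    (hD : ∀ i, 0 ≤ D i) (h0 : D 0 = 0) :
    ∀ N, f N * D N ≤ ∑ i ∈ Finset.range N, f i * (D (i + 1) - D i) := by
  intro N
  induction N with
  | zero => rw [h0, mul_zero, Finset.sum_range_zero]
  | succ N IH =>
    rw [Finset.sum_range_succ]
    have h1 : f (N + 1) * D (N + 1) ≤ f N * D (N + 1) :=
      mul_le_mul_of_nonneg_right (hdec N) (hD (N + 1))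
    linarith

lemma cntX_zero (X : Finset U) (r : U ≃ Fin (Fintype.card U)) : cntX X r 0 = 0 := by
  simp [cntX]

lemma cntX_top (X : Finset U) (r : U ≃ Fin (Fintype.card U)) {i : ℕ}
    (hi : Fintype.card U ≤ i) : cntX X r i = X.card := by
  unfold cntX
  rw [Finset.filter_true_of_mem]
  intro x _
  exact lt_of_lt_of_le (r x).isLt hi

lemma cntX_succ (X : Finset U) (r : U ≃ Fin (Fintype.card U)) {i : ℕ}
    (hi : i < Fintype.card U) :
    cntX X r (i + 1) = cntX X r i + (if r.symm ⟨i, hi⟩ ∈ X then 1 else 0) := by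
  unfold cntX
  have hsplit : (X.filter fun x => (r x : ℕ) < i + 1)
      = (X.filter fun x => (r x : ℕ) < i) ∪ (X.filter fun x => (r x : ℕ) = i) := by
    rw [← Finset.filter_or]
    apply Finset.filter_congr
    intro x _
    omega
  have hdisj : Disjoint (X.filter fun x => (r x : ℕ) < i)
      (X.filter fun x => (r x : ℕ) = i) := by
    rw [Finset.disjoint_left]
    intro x hx1 hx2
    rw [Finset.mem_filter] at hx1 hx2
    omega
  rw [hsplit, Finset.card_union_of_disjoint hdisj]
  congr 1
  by_cases hmem : r.symm ⟨i, hi⟩ ∈ X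
  · have : (X.filter fun x => (r x : ℕ) = i) = {r.symm ⟨i, hi⟩} := by
      ext x
      rw [Finset.mem_filter, Finset.mem_singleton]
      constructor
      · rintro ⟨hx, hr⟩
        have : r x = ⟨i, hi⟩ := Fin.ext hr
        rw [← this, Equiv.symm_apply_apply]
      · rintro rfl
        exact ⟨hmem, by rw [Equiv.apply_symm_apply]⟩
    rw [this, if_pos hmem, Finset.card_singleton]
  · have : (X.filter fun x => (r x : ℕ) = i) = ∅ := by
      ext x
      simp only [Finset.mem_filter, Finset.notMem_empty, iff_false, not_and]
      intro hx hr
      have : r x = ⟨i, hi⟩ := Fin.ext hr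
      have : x = r.symm ⟨i, hi⟩ := by rw [← this, Equiv.symm_apply_apply]
      rw [this] at hx
      exact hmem hx
    rw [this, if_neg hmem, Finset.card_empty]

lemma sum_f_eq (f : Fin (Fintype.card U) → ℝ) (fe : ℕ → ℝ)
    (hfe : ∀ (i : ℕ) (h : i < Fintype.card U), fe i = f ⟨i, h⟩)
    (X : Finset U) (r : U ≃ Fin (Fintype.card U)) :
    ∑ u ∈ X, f (r u)
      = ∑ i ∈ Finset.range (Fintype.card U),
          fe i * ((cntX X r (i + 1) : ℝ) - (cntX X r i : ℝ)) := by
  set F : ℕ → ℝ := fun i => if h : i < Fintype.card U then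
      (if r.symm ⟨i, h⟩ ∈ X then f ⟨i, h⟩ else 0) else 0 with hFdef
  calc ∑ u ∈ X, f (r u)
      = ∑ u : U, (if u ∈ X then f (r u) else 0) := by
        rw [Finset.sum_ite_mem, Finset.univ_inter]
    _ = ∑ j : Fin (Fintype.card U), (if r.symm j ∈ X then f (r (r.symm j)) else 0) :=
        (Equiv.sum_comp r.symm _).symm
    _ = ∑ j : Fin (Fintype.card U), (if r.symm j ∈ X then f j else 0) := by
        simp only [Equiv.apply_symm_apply]
    _ = ∑ j : Fin (Fintype.card U), F (j : ℕ) := by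
        refine Finset.sum_congr rfl (fun j _ => ?_)
        simp only [hFdef]
        rw [dif_pos j.isLt]
    _ = ∑ i ∈ Finset.range (Fintype.card U), F i := Fin.sum_univ_eq_sum_range F _
    _ = ∑ i ∈ Finset.range (Fintype.card U),
          fe i * ((cntX X r (i + 1) : ℝ) - (cntX X r i : ℝ)) := by
        refine Finset.sum_congr rfl (fun i hi => ?_)
        rw [Finset.mem_range] at hi
        simp only [hFdef]
        rw [dif_pos hi, cntX_succ X r hi, hfe i hi]
        push_cast
        split_ifs <;> ring

lemma sumf_le_of_cntX (f : Fin (Fintype.card U) → ℝ) (hf : Antitone f)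
    {rdom s : U ≃ Fin (Fintype.card U)} (X : Finset U)
    (h : ∀ i, cntX X s i ≤ cntX X rdom i) :
    ∑ u ∈ X, f (s u) ≤ ∑ u ∈ X, f (rdom u) := by
  rcases Nat.eq_zero_or_pos (Fintype.card U) with hn | hn
  · have : IsEmpty U := Fintype.card_eq_zero_iff.1 hn
    have : X = ∅ := Finset.eq_empty_of_isEmpty X
    simp [this]
  · set fe : ℕ → ℝ := fun i => if h : i < Fintype.card U then f ⟨i, h⟩
      else f ⟨Fintype.card U - 1, by omega⟩ with hfe
    have hfe' : ∀ (i : ℕ) (h : i < Fintype.card U), fe i = f ⟨i, h⟩ := by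
      intro i h; rw [hfe]; simp only [dif_pos h]
    have hdec : ∀ i, fe (i + 1) ≤ fe i := by
      intro i
      simp only [hfe]
      by_cases h1 : i + 1 < Fintype.card U
      · rw [dif_pos h1, dif_pos (by omega : i < Fintype.card U)]
        exact hf (Fin.mk_le_mk.2 (by omega))
      · by_cases h2 : i < Fintype.card U
        · rw [dif_neg h1, dif_pos h2]
          exact hf (Fin.mk_le_mk.2 (by omega))
        · rw [dif_neg h1, dif_neg h2]
    set D : ℕ → ℝ := fun i => (cntX X rdom i : ℝ) - (cntX X s i : ℝ) with hD
    have hD0 : D 0 = 0 := by rw [hD]; simp [cntX_zero]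
    have hDpos : ∀ i, 0 ≤ D i := by
      intro i; rw [hD]
      simp only [sub_nonneg, Nat.cast_le]
      exact h i
    have hDn : D (Fintype.card U) = 0 := by
      rw [hD]
      simp only [cntX_top X rdom (le_refl _), cntX_top X s (le_refl _), sub_self]
    have habel := abel_aux fe hdec D hDpos hD0 (Fintype.card U)
    rw [hDn, mul_zero] at habel
    rw [sum_f_eq f fe hfe' X rdom, sum_f_eq f fe hfe' X s]
    have hexp : ∀ i ∈ Finset.range (Fintype.card U),
        fe i * (D (i + 1) - D i)
          = fe i * ((cntX X rdom (i + 1) : ℝ) - (cntX X rdom i : ℝ))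
            - fe i * ((cntX X s (i + 1) : ℝ) - (cntX X s i : ℝ)) := by
      intro i _
      rw [hD]; ring
    rw [Finset.sum_congr rfl hexp, Finset.sum_sub_distrib] at habel
    linarith

end Core4
section Core5
variable {U : Type*} [Fintype U] [DecidableEq U] {t : ℕ}

lemma decomp_aux : ∀ N : ℕ, ∀ w : U → ℝ, (∀ u, 0 ≤ w u) →
    (univ.filter fun u => w u ≠ 0).card ≤ N →
    ∃ (M : ℕ) (lvl : U → ℕ) (α : ℕ → ℝ), (∀ j, 0 ≤ α j) ∧ (∀ u, w u = 0 → lvl u = 0) ∧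
      ∀ x : U → ℝ, ∑ u, w u * x u
        = ∑ j ∈ Finset.range M, α j * ∑ u ∈ univ.filter (fun u => j < lvl u), x u := by
  intro N
  induction N with
  | zero =>
    intro w hw hcard
    have hall : ∀ u, w u = 0 := by
      intro u
      by_contra hu
      have : u ∈ univ.filter fun u => w u ≠ 0 := mem_filter.2 ⟨mem_univ _, hu⟩
      have := Finset.card_pos.2 ⟨u, this⟩
      omega
    exact ⟨0, fun _ => 0, fun _ => 0, fun _ => le_refl _, fun u _ => rfl,
      fun x => by simp [hall]⟩
  | succ N IH =>
    intro w hw hcard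
    by_cases hne : (univ.filter fun u => w u ≠ 0).Nonempty
    · obtain ⟨v0, hv0mem, hv0min⟩ := Finset.exists_min_image _ w hne
      have hv0ne : w v0 ≠ 0 := (mem_filter.1 hv0mem).2
      set v := w v0 with hvdef
      have hvpos : 0 < v := lt_of_le_of_ne (hw v0) (Ne.symm hv0ne)
      set w' : U → ℝ := fun u => if w u = 0 then 0 else w u - v with hw'def
      have hw' : ∀ u, 0 ≤ w' u := by
        intro u
        simp only [hw'def]
        split_ifs with h
        · exact le_refl _
        · have : u ∈ univ.filter fun u => w u ≠ 0 := mem_filter.2 ⟨mem_univ _, h⟩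
          have := hv0min u this
          linarith
      have hsubset : (univ.filter fun u => w' u ≠ 0) ⊆ (univ.filter fun u => w u ≠ 0).erase v0 := by
        intro u hu
        obtain ⟨-, hu⟩ := mem_filter.1 hu
        rw [Finset.mem_erase]
        constructor
        · rintro rfl
          apply hu
          simp only [hw'def, if_neg hv0ne]
          rw [← hvdef]; simp
        · refine mem_filter.2 ⟨mem_univ _, ?_⟩
          intro hz
          exact hu (by simp only [hw'def, if_pos hz])
      have hcard' : (univ.filter fun u => w' u ≠ 0).card ≤ N := by
        have h1 := Finset.card_le_card hsubset
        have h2 := Finset.card_erase_of_mem hv0mem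
        omega
      obtain ⟨M', lvl', α', hα', hz', hid'⟩ := IH w' hw' hcard'
      refine ⟨M' + 1, fun u => if w u = 0 then 0 else lvl' u + 1,
        fun j => if j = 0 then v else α' (j - 1), ?_, ?_, ?_⟩
      · intro j
        show (0:ℝ) ≤ if j = 0 then v else α' (j - 1)
        split_ifs
        · exact le_of_lt hvpos
        · exact hα' _
      · intro u hu
        show (if w u = 0 then 0 else lvl' u + 1) = 0
        simp only [if_pos hu]
      · intro x
        have hpt : ∀ u, w u * x u = w' u * x u + (if w u = 0 then 0 else v) * x u := by
          intro u
          simp only [hw'def]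
          split_ifs with h
          · rw [h]; ring
          · ring
        rw [Finset.sum_congr rfl (fun u _ => hpt u), Finset.sum_add_distrib, hid' x]
        rw [Finset.sum_range_succ']
        have hset0 : (univ.filter fun u => 0 < (if w u = 0 then 0 else lvl' u + 1)) =
            (univ.filter fun u => w u ≠ 0) := by
          apply Finset.filter_congr
          intro u _
          constructor
          · intro h hz
            rw [if_pos hz] at h
            omega
          · intro h
            rw [if_neg h]
            omega
        have hsetj : ∀ j : ℕ, (univ.filter fun u => j + 1 < (if w u = 0 then 0 else lvl' u + 1))
            = (univ.filter fun u => j < lvl' u) := by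
          intro j
          apply Finset.filter_congr
          intro u _
          constructor
          · intro h
            by_cases hz : w u = 0
            · rw [if_pos hz] at h; omega
            · rw [if_neg hz] at h; omega
          · intro h
            have h1 : lvl' u ≠ 0 := by omega
            have h2 : w' u ≠ 0 := fun hz => h1 (hz' u hz)
            have h3 : w u ≠ 0 := by
              intro hz
              exact h2 (by simp only [hw'def, if_pos hz])
            rw [if_neg h3]
            omega
        have hterm0 : (if (0:ℕ) = 0 then v else α' (0 - 1)) *
            ∑ u ∈ univ.filter (fun u => 0 < (if w u = 0 then 0 else lvl' u + 1)), x u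
            = ∑ u, (if w u = 0 then 0 else v) * x u := by
          rw [if_pos rfl, hset0]
          rw [Finset.mul_sum]
          rw [← Finset.sum_filter_add_sum_filter_not univ (fun u => w u = 0)
            (fun u => (if w u = 0 then 0 else v) * x u)]
          have e1 : ∑ u ∈ univ.filter (fun u => w u = 0),
              (if w u = 0 then 0 else v) * x u = 0 := by
            apply Finset.sum_eq_zero
            intro u hu
            rw [if_pos (mem_filter.1 hu).2, zero_mul]
          have e2 : ∑ u ∈ univ.filter (fun u => ¬ w u = 0),
              (if w u = 0 then 0 else v) * x u
              = ∑ u ∈ univ.filter (fun u => w u ≠ 0), v * x u := by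
            apply Finset.sum_congr rfl
            intro u hu
            rw [if_neg (mem_filter.1 hu).2]
          rw [e1, e2, zero_add]
        have htermj : ∀ j ∈ Finset.range M',
            (if j + 1 = 0 then v else α' (j + 1 - 1)) *
              ∑ u ∈ univ.filter (fun u => j + 1 < (if w u = 0 then 0 else lvl' u + 1)), x u
            = α' j * ∑ u ∈ univ.filter (fun u => j < lvl' u), x u := by
          intro j _
          rw [if_neg (Nat.succ_ne_zero j), hsetj j]
          congr 1
        rw [Finset.sum_congr rfl htermj, hterm0]
    · rw [Finset.not_nonempty_iff_eq_empty] at hne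
      have hall : ∀ u, w u = 0 := by
        intro u
        by_contra hu
        have : u ∈ univ.filter fun u => w u ≠ 0 := mem_filter.2 ⟨mem_univ _, hu⟩
        rw [hne] at this
        exact absurd this (Finset.notMem_empty u)
      exact ⟨0, fun _ => 0, fun _ => 0, fun _ => le_refl _, fun u _ => rfl,
        fun x => by simp [hall]⟩

lemma decomp (w : U → ℝ) (hw : ∀ u, 0 ≤ w u) :
    ∃ (M : ℕ) (lvl : U → ℕ) (α : ℕ → ℝ), (∀ j, 0 ≤ α j) ∧
      ∀ x : U → ℝ, ∑ u, w u * x u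
        = ∑ j ∈ Finset.range M, α j * ∑ u ∈ univ.filter (fun u => j < lvl u), x u := by
  obtain ⟨M, lvl, α, h1, _, h3⟩ := decomp_aux (univ.filter fun u : U => w u ≠ 0).card w hw (le_refl _)
  exact ⟨M, lvl, α, h1, h3⟩

end Core5
section Core6
variable {U : Type*} [Fintype U] [DecidableEq U] {t : ℕ}

lemma le_Hfun {Vld : (U ≃ Fin (Fintype.card U)) → Prop} {f : Fin (Fintype.card U) → ℝ}
    {g : U → ℝ} {E : Finset U} {r : U ≃ Fin (Fintype.card U)} (hr : Vld r) :
    ∑ u ∈ E, (f (r u) - g u) ≤ Hfun Vld f g E := by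
  apply le_csSup
  · exact Set.Finite.bddAbove ((Set.toFinite _).image _)
  · exact Set.mem_image_of_mem _ hr

lemma Hfun_le {Vld : (U ≃ Fin (Fintype.card U)) → Prop} {f : Fin (Fintype.card U) → ℝ}
    {g : U → ℝ} {E : Finset U} (hne : ∃ r, Vld r) {B : ℝ}
    (hb : ∀ r, Vld r → ∑ u ∈ E, (f (r u) - g u) ≤ B) :
    Hfun Vld f g E ≤ B := by
  apply csSup_le
  · obtain ⟨r, hr⟩ := hne
    exact ⟨_, Set.mem_image_of_mem _ hr⟩
  · rintro b ⟨r, hr, rfl⟩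
    exact hb r hr

/-- Simultaneous optimizer over all level sets of `lvl`. -/
lemma exists_simopt (c : U → Fin t) (ub : Fin (Fintype.card U) → Fin t → ℕ)
    (hS : ∃ r, ValidUB c ub r) (f : Fin (Fintype.card U) → ℝ) (hf : Antitone f)
    (g : U → ℝ) (lvl : U → ℕ) :
    ∃ rs, ValidUB c ub rs ∧ ∀ j : ℕ,
      Hfun (ValidUB c ub) f g (univ.filter fun u => j < lvl u)
        ≤ ∑ u ∈ univ.filter (fun u => j < lvl u), (f (rs u) - g u) := by
  obtain ⟨rs, hval, hg⟩ := exists_locGreedy c ub hS lvl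
  refine ⟨rs, hval, fun j => ?_⟩
  apply Hfun_le hS
  intro s hs
  have hcnt := cntX_le_of_locGreedy hval hg s hs j
  have hsum := sumf_le_of_cntX f hf (univ.filter fun u => j < lvl u) hcnt
  rw [Finset.sum_sub_distrib, Finset.sum_sub_distrib]
  linarith

end Core6
section Core7
variable {U : Type*} [Fintype U] [DecidableEq U] {t : ℕ}

noncomputable def diracD (r0 : U ≃ Fin (Fintype.card U)) : (U ≃ Fin (Fintype.card U)) → ℝ :=
  fun r => if r = r0 then 1 else 0

lemma diracD_isDistrib {Vld : (U ≃ Fin (Fintype.card U)) → Prop}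
    {r0 : U ≃ Fin (Fintype.card U)} (h : Vld r0) : IsDistribOn Vld (diracD r0) := by
  classical
  refine ⟨fun r => by unfold diracD; split_ifs <;> norm_num, ?_, ?_⟩
  · unfold diracD
    rw [Finset.sum_ite_eq' univ r0 (fun _ => (1:ℝ))]
    simp
  · intro r hr
    unfold diracD at hr
    split_ifs at hr with h1
    · rw [h1]; exact h
    · exact absurd rfl hr

lemma EV_diracD (f : Fin (Fintype.card U) → ℝ) (g : U → ℝ)
    (r0 : U ≃ Fin (Fintype.card U)) (u : U) :
    EV f g (diracD r0) u = f (r0 u) - g u := by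
  classical
  unfold EV diracD
  have : ∀ r : U ≃ Fin (Fintype.card U),
      (if r = r0 then (1:ℝ) else 0) * (f (r u) - g u)
        = (if r = r0 then (f (r u) - g u) else 0) := by
    intro r; split_ifs <;> ring
  rw [Finset.sum_congr rfl (fun r _ => this r)]
  rw [Finset.sum_ite_eq' univ r0 (fun r => f (r u) - g u)]
  simp

/-- `EV` as a linear map in the distribution. -/
noncomputable def EVmap (f : Fin (Fintype.card U) → ℝ) (g : U → ℝ) :
    ((U ≃ Fin (Fintype.card U)) → ℝ) →ₗ[ℝ] (U → ℝ) where
  toFun := fun p u => EV f g p u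
  map_add' := by
    intro p q
    funext u
    show ∑ r : U ≃ Fin (Fintype.card U), (p r + q r) * (f (r u) - g u)
        = (∑ r : U ≃ Fin (Fintype.card U), p r * (f (r u) - g u))
          + ∑ r : U ≃ Fin (Fintype.card U), q r * (f (r u) - g u)
    rw [← Finset.sum_add_distrib]
    exact Finset.sum_congr rfl (fun r _ => by ring)
  map_smul' := by
    intro a p
    funext u
    show ∑ r : U ≃ Fin (Fintype.card U), (a * p r) * (f (r u) - g u)
        = a * ∑ r : U ≃ Fin (Fintype.card U), p r * (f (r u) - g u)
    rw [Finset.mul_sum]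
    exact Finset.sum_congr rfl (fun r _ => by ring)

lemma distrib_convex {Vld : (U ≃ Fin (Fintype.card U)) → Prop} :
    Convex ℝ {p : (U ≃ Fin (Fintype.card U)) → ℝ | IsDistribOn Vld p} := by
  intro p hp q hq a b ha hb hab
  refine ⟨fun r => add_nonneg (mul_nonneg ha (hp.1 r)) (mul_nonneg hb (hq.1 r)), ?_, ?_⟩
  · show ∑ r, (a * p r + b * q r) = 1
    rw [Finset.sum_add_distrib, ← Finset.mul_sum, ← Finset.mul_sum, hp.2.1, hq.2.1]
    linarith
  · intro r hr
    by_contra hv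
    have h1 : p r = 0 := by
      by_contra h; exact hv (hp.2.2 r h)
    have h2 : q r = 0 := by
      by_contra h; exact hv (hq.2.2 r h)
    apply hr
    show a * p r + b * q r = 0
    rw [h1, h2]; ring

lemma distrib_compact {Vld : (U ≃ Fin (Fintype.card U)) → Prop} :
    IsCompact {p : (U ≃ Fin (Fintype.card U)) → ℝ | IsDistribOn Vld p} := by
  classical
  apply IsCompact.of_isClosed_subset
    (isCompact_univ_pi (fun _ : U ≃ Fin (Fintype.card U) => isCompact_Icc (a := (0:ℝ)) (b := 1)))
  · have h1 : IsClosed {p : (U ≃ Fin (Fintype.card U)) → ℝ | ∀ r, 0 ≤ p r} := by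
      have : {p : (U ≃ Fin (Fintype.card U)) → ℝ | ∀ r, 0 ≤ p r}
          = ⋂ r, {p | 0 ≤ p r} := by ext p; simp
      rw [this]
      exact isClosed_iInter (fun r => isClosed_le continuous_const (continuous_apply r))
    have h2 : IsClosed {p : (U ≃ Fin (Fintype.card U)) → ℝ | ∑ r, p r = 1} :=
      isClosed_eq (by continuity) continuous_const
    have h3 : IsClosed {p : (U ≃ Fin (Fintype.card U)) → ℝ | ∀ r, p r ≠ 0 → Vld r} := by
      have : {p : (U ≃ Fin (Fintype.card U)) → ℝ | ∀ r, p r ≠ 0 → Vld r}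
          = ⋂ r, {p | p r ≠ 0 → Vld r} := by ext p; simp
      rw [this]
      refine isClosed_iInter (fun r => ?_)
      by_cases hv : Vld r
      · have : {p : (U ≃ Fin (Fintype.card U)) → ℝ | p r ≠ 0 → Vld r} = Set.univ := by
          ext p; simp [hv]
        rw [this]; exact isClosed_univ
      · have : {p : (U ≃ Fin (Fintype.card U)) → ℝ | p r ≠ 0 → Vld r} = {p | p r = 0} := by
          ext p
          simp only [Set.mem_setOf_eq]
          constructor
          · intro h
            by_contra hne
            exact hv (h hne)
          · intro h hne
            exact absurd h hne
        rw [this]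
        exact isClosed_eq (continuous_apply r) continuous_const
    have : {p : (U ≃ Fin (Fintype.card U)) → ℝ | IsDistribOn Vld p}
        = {p | ∀ r, 0 ≤ p r} ∩ ({p | ∑ r, p r = 1} ∩ {p | ∀ r, p r ≠ 0 → Vld r}) := by
      ext p
      simp only [Set.mem_setOf_eq, Set.mem_inter_iff, IsDistribOn]
    rw [this]
    exact h1.inter (h2.inter h3)
  · intro p hp
    rw [Set.mem_univ_pi]
    intro r
    refine ⟨hp.1 r, ?_⟩
    rw [← hp.2.1]
    exact Finset.single_le_sum (fun r' _ => hp.1 r') (mem_univ r)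

end Core7
section Core8
open Pointwise
variable {U : Type*} [Fintype U] [DecidableEq U] {t : ℕ}

lemma hard_direction (c : U → Fin t) (ub : Fin (Fintype.card U) → Fin t → ℕ)
    (f : Fin (Fintype.card U) → ℝ) (hf : Antitone f) (g : U → ℝ)
    (hS : ∃ r, ValidUB c ub r) (lam : U → ℝ)
    (hcon : ∀ X : Finset U, ∑ u ∈ X, lam u ≤ Hfun (ValidUB c ub) f g X) :
    ∃ D, IsDistribOn (ValidUB c ub) D ∧ ∀ u : U, lam u ≤ EV f g D u := by
  classical
  set T := EVmap (U := U) f g with hT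
  set Dset : Set ((U ≃ Fin (Fintype.card U)) → ℝ) :=
    {p | IsDistribOn (ValidUB c ub) p} with hDset
  set K : Set (U → ℝ) := T '' Dset with hK
  set Neg : Set (U → ℝ) := {z | ∀ u, z u ≤ 0} with hNeg
  by_cases hmem : lam ∈ K + Neg
  · obtain ⟨y, hy, z, hz, hyz⟩ := Set.mem_add.1 hmem
    obtain ⟨p, hp, rfl⟩ := hy
    refine ⟨p, hp, fun u => ?_⟩
    have h1 : lam u = T p u + z u := by rw [← hyz]; rfl
    have h2 : z u ≤ 0 := hz u
    have h3 : T p u = EV f g p u := rfl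
    linarith [h1, h2, h3.symm.le, h3.le]
  · exfalso
    have hKcomp : IsCompact K := distrib_compact.image T.continuous_of_finiteDimensional
    have hKconv : Convex ℝ K := distrib_convex.linear_image T
    have hNegclosed : IsClosed Neg := by
      have h : Neg = ⋂ u, {z : U → ℝ | z u ≤ 0} := by ext z; simp [hNeg]
      rw [h]
      exact isClosed_iInter (fun u => isClosed_le (continuous_apply u) continuous_const)
    have hNegconv : Convex ℝ Neg := by
      intro z1 h1 z2 h2 a b ha hb _ u
      have := h1 u
      have := h2 u
      have ha1 : a * z1 u ≤ 0 := mul_nonpos_of_nonneg_of_nonpos ha (h1 u)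
      have hb1 : b * z2 u ≤ 0 := mul_nonpos_of_nonneg_of_nonpos hb (h2 u)
      show a * z1 u + b * z2 u ≤ 0
      linarith
    have hCclosed : IsClosed (K + Neg) := hNegclosed.add_left_of_isCompact hKcomp
    have hCconv : Convex ℝ (K + Neg) := hKconv.add hNegconv
    obtain ⟨φ, b, hb1, hb2⟩ := geometric_hahn_banach_closed_point hCconv hCclosed hmem
    set w : U → ℝ := fun u => φ (Pi.single u 1) with hw
    have hφeq : ∀ x : U → ℝ, φ x = ∑ u, w u * x u := by
      intro x
      conv_lhs => rw [← Finset.univ_sum_single x]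
      rw [map_sum]
      refine Finset.sum_congr rfl (fun u _ => ?_)
      have hs : (Pi.single u (x u) : U → ℝ) = x u • (Pi.single u (1:ℝ) : U → ℝ) := by
        rw [← Pi.single_smul, smul_eq_mul, mul_one]
      rw [hs, map_smul, smul_eq_mul, hw]
      ring
    obtain ⟨r0, hr0⟩ := id hS
    have hy0K : T (diracD r0) ∈ K := ⟨diracD r0, diracD_isDistrib hr0, rfl⟩
    have hKC : K ⊆ K + Neg := by
      intro y hy
      exact Set.mem_add.2 ⟨y, hy, 0, fun u => le_refl 0, add_zero y⟩
    have hwpos : ∀ u, 0 ≤ w u := by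
      intro u
      by_contra hneg
      push_neg at hneg
      set y0 := T (diracD r0) with hy0
      have hy0b : φ y0 < b := hb1 _ (hKC hy0K)
      set tt : ℝ := (b - φ y0 + 1) / (-(w u)) with htt
      have httpos : 0 < tt := div_pos (by linarith) (by linarith)
      have hxC : y0 - tt • (Pi.single u 1 : U → ℝ) ∈ K + Neg := by
        refine Set.mem_add.2 ⟨y0, hy0K, -(tt • (Pi.single u 1 : U → ℝ)), ?_, by ring⟩
        intro v
        show -(tt • (Pi.single u 1 : U → ℝ)) v ≤ 0
        simp only [Pi.neg_apply, Pi.smul_apply, smul_eq_mul, neg_nonpos]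
        apply mul_nonneg (le_of_lt httpos)
        by_cases hvu : v = u
        · subst hvu; rw [Pi.single_eq_same]; norm_num
        · rw [Pi.single_eq_of_ne hvu]
      have hlt := hb1 _ hxC
      rw [map_sub, map_smul, smul_eq_mul] at hlt
      have hmul : tt * (-(w u)) = b - φ y0 + 1 :=
        div_mul_cancel₀ _ (ne_of_gt (by linarith))
      have : φ (Pi.single u 1 : U → ℝ) = w u := rfl
      rw [this] at hlt
      linarith
    obtain ⟨M, lvl, α, hα, hid⟩ := decomp w hwpos
    obtain ⟨rs, hrsval, hopt⟩ := exists_simopt c ub hS f hf g lvl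
    set V : U → ℝ := fun u => f (rs u) - g u with hV
    have hVK : V ∈ K := by
      refine ⟨diracD rs, diracD_isDistrib hrsval, ?_⟩
      funext u
      show EV f g (diracD rs) u = V u
      rw [EV_diracD]
    have hVb : φ V < b := hb1 _ (hKC hVK)
    have hchain : φ lam ≤ φ V := by
      rw [hφeq lam, hφeq V, hid lam, hid V]
      apply Finset.sum_le_sum
      intro j _
      apply mul_le_mul_of_nonneg_left _ (hα j)
      calc ∑ u ∈ univ.filter (fun u => j < lvl u), lam u
          ≤ Hfun (ValidUB c ub) f g (univ.filter (fun u => j < lvl u)) := hcon _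
        _ ≤ ∑ u ∈ univ.filter (fun u => j < lvl u), (f (rs u) - g u) := hopt j
        _ = ∑ u ∈ univ.filter (fun u => j < lvl u), V u := rfl
    linarith

lemma easy_direction (c : U → Fin t) (ub : Fin (Fintype.card U) → Fin t → ℕ)
    (f : Fin (Fintype.card U) → ℝ) (g : U → ℝ) (lam : U → ℝ)
    (D : (U ≃ Fin (Fintype.card U)) → ℝ) (hD : IsDistribOn (ValidUB c ub) D)
    (hEV : ∀ u : U, lam u ≤ EV f g D u) (X : Finset U) :
    ∑ u ∈ X, lam u ≤ Hfun (ValidUB c ub) f g X := by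
  classical
  have h1 : ∑ u ∈ X, lam u ≤ ∑ u ∈ X, EV f g D u :=
    Finset.sum_le_sum (fun u _ => hEV u)
  have h2 : ∑ u ∈ X, EV f g D u
      = ∑ r : U ≃ Fin (Fintype.card U), D r * ∑ u ∈ X, (f (r u) - g u) := by
    unfold EV
    rw [Finset.sum_comm]
    exact Finset.sum_congr rfl (fun r _ => by rw [Finset.mul_sum])
  have h3 : ∑ r : U ≃ Fin (Fintype.card U), D r * ∑ u ∈ X, (f (r u) - g u)
      ≤ ∑ r : U ≃ Fin (Fintype.card U), D r * Hfun (ValidUB c ub) f g X := by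
    apply Finset.sum_le_sum
    intro r _
    by_cases hr : D r = 0
    · rw [hr, zero_mul, zero_mul]
    · exact mul_le_mul_of_nonneg_left (le_Hfun (hD.2.2 r hr)) (hD.1 r)
  have h4 : ∑ r : U ≃ Fin (Fintype.card U), D r * Hfun (ValidUB c ub) f g X
      = Hfun (ValidUB c ub) f g X := by
    rw [← Finset.sum_mul, hD.2.1, one_mul]
  linarith

end Core8

/-- There is a distribution of valid rankings with `D[u] ≥ λ u` for all `u` iff for every
subset `X` of individuals, `max_{r ∈ 𝒮} ∑_{u ∈ X} V(r,u) ≥ ∑_{u ∈ X} λ u`. -/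
theorem exists_distrib_iff_subset_bound {U : Type*} [Fintype U] [DecidableEq U] {t : ℕ}
    (c : U → Fin t) (ub : Fin (Fintype.card U) → Fin t → ℕ)
    (f : Fin (Fintype.card U) → ℝ) (hf : Antitone f) (g : U → ℝ)
    (hS : ∃ r, ValidUB c ub r) (lam : U → ℝ) :
    (∃ D, IsDistribOn (ValidUB c ub) D ∧ ∀ u : U, lam u ≤ EV f g D u) ↔
      (∀ X : Finset U, ∑ u ∈ X, lam u ≤ Hfun (ValidUB c ub) f g X) := by
  constructor
  · rintro ⟨D, hD, hEV⟩ X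
    exact easy_direction c ub f g lam D hD hEV X
  · intro hcon
    exact hard_direction c ub f hf g hS lam hcon
end
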